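/- arXiv:1508.01068 — 8 statements merged into one kernel-verified Lean document; each statement's English description precedes it below -/
import Mathlib

section
/- Let γ, δ, τ be nonzero ordinals with δ and τ of uncountable cofinality, and Σ = ⟨S_β : β < τ⟩ a partition of δ*. Let a ∈ L^{δ,γ} with |a| ≥ 2 and a(|a|−1) = 0, and let B be a countable collection of basic sets of I^{Σ,γ}, each contained in [a]⁻, such that no initial segment of L^{δ,γ} belongs to B. Then there is a countable collection E of pairwise disjoint basic sets contained in [a]⁻ such that: (a) every member of B is contained in a (unique) member of E; (b) every member of E contains some member of B; (c) no member of E is an initial segment of L^{δ,γ}; and (d) no two distinct members of E are both contained in a single basic set that is included in [a]⁻ and is not an initial segment of L^{δ,γ}. Moreover, the same statement holds with [a]⁻ replaced by [a]⁺. -/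
open Ordinal Cardinal

abbrev SOrd : Type 1 := Ordinalᵒᵈ ⊕ₗ Ordinal

namespace SOrd
def neg (α : Ordinal) : SOrd := toLex (Sum.inl (OrderDual.toDual α))
def pos (α : Ordinal) : SOrd := toLex (Sum.inr α)
def IsPos (a : SOrd) : Prop := ∃ α : Ordinal, a = pos α
def val (a : SOrd) : Ordinal := Sum.elim (fun b => OrderDual.ofDual b) id (ofLex a)
end SOrd

def IsBetween (δ : Ordinal) (a : SOrd) : Prop := SOrd.neg δ < a ∧ a < SOrd.pos δ

def Lset (δ γ : Ordinal) : Set (List SOrd) :=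
  {x | x ≠ [] ∧ (∃ h : 0 < x.length, ∃ α < γ, x[0]'h = SOrd.pos α) ∧
    ∀ k, ∀ h : k < x.length, 0 < k → IsBetween δ (x[k]'h)}

def Llt (x y : List SOrd) : Prop :=
  (∃ k, ∃ hx : k < x.length, ∃ hy : k < y.length,
      x.take k = y.take k ∧ x[k]'hx < y[k]'hy) ∨
  (∃ hy : x.length < y.length, y.take x.length = x ∧ SOrd.IsPos (y[x.length]'hy)) ∨
  (∃ hx : y.length < x.length, x.take y.length = y ∧ ¬ SOrd.IsPos (x[y.length]'hx))

/-- `S` (as the indexed family `⟨S β : β < τ⟩`, where each `ξ ∈ S β` codes the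
negative ordinal `ξ*`) is a partition of `δ*`. -/
def IsPartition (δ τ : Ordinal) (S : Ordinal → Set Ordinal) : Prop :=
  (∀ β, S β ⊆ Set.Iio δ) ∧ (∀ β, τ ≤ β → S β = ∅) ∧ (∀ ξ, ξ < δ → ∃! β, ξ ∈ S β)

/-- `β^Σ(ξ*)`: the index of the piece of the partition containing `ξ*`. -/
noncomputable def colorOf (S : Ordinal → Set Ordinal) (ξ : Ordinal) : Ordinal :=
  sInf {β | ξ ∈ S β}

/-- The index set `r_x`. -/
def rIdx (τ : Ordinal) (x : List SOrd) : Set ℕ :=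
  {i | ∃ h : i < x.length, 2 ≤ i ∧ i % 2 = 0 ∧ x[i]'h < SOrd.pos τ}

/-- `Σ`-relevant sequences. -/
def Relevant (δ γ τ : Ordinal) (S : Ordinal → Set Ordinal) (x : List SOrd) : Prop :=
  x ∈ Lset δ γ ∧ 3 ≤ x.length ∧ x.length % 2 = 1 ∧
  (∀ i, ∀ h : i < x.length, (SOrd.IsPos (x[i]'h) ↔ i % 2 = 0)) ∧
  (∀ i ∈ rIdx τ x, ∀ j ∈ rIdx τ x, i < j →
    ∀ (hi : i - 1 < x.length) (hj : j - 1 < x.length),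
      colorOf S (x[j-1]'hj).val < colorOf S (x[i-1]'hi).val) ∧
  x.length - 1 ∈ rIdx τ x

/-- `J^{Σ,γ}_x = {z ∈ L^{δ,γ} : x↾(|x|-1) ≤ z < x}`. -/
def Jset (δ γ : Ordinal) (x : List SOrd) : Set (List SOrd) :=
  {z ∈ Lset δ γ | (z = x.take (x.length - 1) ∨ Llt (x.take (x.length - 1)) z) ∧ Llt z x}

/-- The initial segment `L^{δ,γ}_α = {z : z < ⟨α⟩}` (equal to `L^{δ,γ}` when `α = γ`). -/
def Lbelow (δ γ α : Ordinal) : Set (List SOrd) :=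
  {z ∈ Lset δ γ | Llt z [SOrd.pos α]}

/-- `L^{δ,γ}_x = {z ∈ L^{δ,γ} : z < x}`. -/
def Lx (δ γ : Ordinal) (x : List SOrd) : Set (List SOrd) :=
  {z ∈ Lset δ γ | Llt z x}

/-- The basic sets of `I^{Σ,γ}`. -/
def IsBasic (δ γ τ : Ordinal) (S : Ordinal → Set Ordinal) (B : Set (List SOrd)) : Prop :=
  (∃ α ≤ γ, B = Lbelow δ γ α) ∨
  (∃ x, Relevant δ γ τ S x ∧ B = Jset δ γ x) ∨
  (∃ z ∈ Lset δ γ, B = ({z} : Set (List SOrd)))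

/-- `I^{Σ,γ}`: finite unions of basic sets. -/
def Ifam (δ γ τ : Ordinal) (S : Ordinal → Set Ordinal) : Set (Set (List SOrd)) :=
  {A | ∃ E : Finset (Set (List SOrd)), (∀ B ∈ E, IsBasic δ γ τ S B) ∧
    A = ⋃ B ∈ E, (B : Set (List SOrd))}

/-- `I^{Σ,γ}_x = {A ⊆ L^{δ,γ}_x : A ∈ I^{Σ,γ}}`. -/
def Ix (δ γ τ : Ordinal) (S : Ordinal → Set Ordinal) (x : List SOrd) : Set (Set (List SOrd)) :=
  {A | A ⊆ Lx δ γ x ∧ A ∈ Ifam δ γ τ S}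

/-- `[a]⁻`: the `x ∈ L^{δ,γ}` end-extending `a↾(|a|-1)` with `|x| ≥ |a|` and
`x(|a|-1) < a(|a|-1)`. -/
def bracketNeg (δ γ : Ordinal) (a : List SOrd) : Set (List SOrd) :=
  {x ∈ Lset δ γ | a.length ≤ x.length ∧
    x.take (a.length - 1) = a.take (a.length - 1) ∧
    ∃ (hx : a.length - 1 < x.length) (ha : a.length - 1 < a.length),
      x[a.length - 1]'hx < a[a.length - 1]'ha}

/-- `[a]⁺`: the `x ∈ L^{δ,γ}` end-extending `a↾(|a|-1)` that are not in `[a]⁻`. -/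
def bracketPos (δ γ : Ordinal) (a : List SOrd) : Set (List SOrd) :=
  {x ∈ Lset δ γ | a.length - 1 ≤ x.length ∧
    x.take (a.length - 1) = a.take (a.length - 1)} \ bracketNeg δ γ a

/-- `B` is a basic set which is an initial segment of `L^{δ,γ}`. -/
def IsInitialSegmentBasic (δ γ : Ordinal) (B : Set (List SOrd)) : Prop :=
  ∃ α ≤ γ, B = Lbelow δ γ α

/-- The conclusion of the disjoint-refinement lemma for the region `K`. -/
def HasDisjointRefinement (δ γ τ : Ordinal) (S : Ordinal → Set Ordinal)
    (K : Set (List SOrd)) (𝓑 : Set (Set (List SOrd))) : Prop :=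
  ∃ 𝓔 : Set (Set (List SOrd)), 𝓔.Countable ∧
    (∀ D ∈ 𝓔, IsBasic δ γ τ S D ∧ D ⊆ K) ∧
    𝓔.Pairwise Disjoint ∧
    (∀ C ∈ 𝓑, ∃! D, D ∈ 𝓔 ∧ C ⊆ D) ∧
    (∀ D ∈ 𝓔, ∃ C ∈ 𝓑, C ⊆ D) ∧
    (∀ D ∈ 𝓔, ¬ IsInitialSegmentBasic δ γ D) ∧
    (∀ D ∈ 𝓔, ∀ D' ∈ 𝓔, D ≠ D' →
      ∀ H, IsBasic δ γ τ S H → H ⊆ K → ¬ IsInitialSegmentBasic δ γ H →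
        ¬ (D ⊆ H ∧ D' ⊆ H))

namespace SOrdFacts
open SOrd

lemma pos_lt_pos_iff {α β : Ordinal} : pos α < pos β ↔ α < β := Sum.Lex.inr_lt_inr_iff

lemma neg_lt_neg_iff {α β : Ordinal} : neg α < neg β ↔ β < α := by
  show toLex (Sum.inl _) < toLex (Sum.inl _) ↔ _
  rw [Sum.Lex.inl_lt_inl_iff]; exact OrderDual.toDual_lt_toDual

lemma neg_lt_pos (α β : Ordinal) : neg α < pos β := Sum.Lex.inl_lt_inr _ _

lemma not_pos_lt_neg (α β : Ordinal) : ¬ pos α < neg β := Sum.Lex.not_inr_lt_inl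

lemma isPos_pos (α : Ordinal) : IsPos (pos α) := ⟨α, rfl⟩

lemma pos_injective : Function.Injective pos := by
  intro a b h; simpa [pos] using h

lemma neg_injective : Function.Injective neg := by
  intro a b h; simpa [neg] using h

lemma not_isPos_neg (α : Ordinal) : ¬ IsPos (neg α) := by
  rintro ⟨β, h⟩; simp [neg, pos] at h

lemma pos_or_neg (a : SOrd) : (∃ α, a = pos α) ∨ (∃ α, a = neg α) := by
  rcases h : ofLex a with b | b
  · exact Or.inr ⟨OrderDual.ofDual b, by simp [neg, ← h]⟩
  · exact Or.inl ⟨b, by simp [pos, ← h]⟩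

lemma val_pos (α : Ordinal) : (pos α).val = α := rfl

lemma isBetween_pos {δ β : Ordinal} : IsBetween δ (pos β) ↔ β < δ := by
  constructor
  · rintro ⟨-, h⟩; exact pos_lt_pos_iff.1 h
  · intro h; exact ⟨neg_lt_pos _ _, pos_lt_pos_iff.2 h⟩

lemma isBetween_neg {δ ξ : Ordinal} : IsBetween δ (neg ξ) ↔ ξ < δ := by
  constructor
  · rintro ⟨h, -⟩; exact neg_lt_neg_iff.1 h
  · intro h; exact ⟨neg_lt_neg_iff.2 h, neg_lt_pos _ _⟩

end SOrdFacts

namespace ListFacts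

lemma take_eq_getElem {x y : List SOrd} {k i : ℕ} (h : x.take k = y.take k) (hik : i < k)
    (hx : i < x.length) (hy : i < y.length) : x[i] = y[i] := by
  have h1 : (x.take k)[i]'(by simp; omega) = x[i] := List.getElem_take
  have h2 : (y.take k)[i]'(by simp; omega) = y[i] := List.getElem_take
  rw [← h1, ← h2]
  congr 1

lemma take_eq_of_getElem {x y : List SOrd} {k : ℕ} (hx : k ≤ x.length) (hy : k ≤ y.length)
    (h : ∀ i, i < k → ∀ (h1 : i < x.length) (h2 : i < y.length), x[i] = y[i]) :
    x.take k = y.take k := by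
  apply List.ext_getElem (by simp; omega)
  intro i h1 h2
  simp only [List.length_take] at h1
  rw [List.getElem_take, List.getElem_take]
  exact h i (by omega) (by omega) (by omega)

lemma prefix_getElem {x y : List SOrd} (h : x <+: y) {i : ℕ} (hi : i < x.length) :
    y[i]'(lt_of_lt_of_le hi h.length_le) = x[i] := (List.IsPrefix.getElem h hi).symm

lemma take_eq_of_prefix {x y : List SOrd} (h : x <+: y) {k : ℕ} (hk : k ≤ x.length) :
    x.take k = y.take k :=
  take_eq_of_getElem hk (le_trans hk h.length_le)
    (fun i _ h1 _ => (prefix_getElem h h1).symm)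

lemma prefix_of_take_eq {x y : List SOrd} (h : y.take x.length = x) : x <+: y := by
  rw [← h]; exact List.take_prefix _ _

end ListFacts

namespace Refine
open SOrd SOrdFacts ListFacts

/-- Stem-cone sets: the normal form of `Jset`s of relevant sequences. -/
def SC (δ γ : Ordinal) (w : List SOrd) (l : Ordinal) : Set (List SOrd) :=
  {z | z ∈ Lset δ γ ∧ (z = w ∨
    (∃ h : w.length < z.length, w <+: z ∧ ∃ β < l, z[w.length]'h = SOrd.pos β) ∨
    (∃ h : w.length + 1 < z.length, w <+: z ∧
      z[w.length]'(by omega) = SOrd.pos l ∧ ¬ SOrd.IsPos (z[w.length+1]'h)))}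

lemma SC_mem_Lset {δ γ : Ordinal} {w : List SOrd} {l : Ordinal} {z : List SOrd}
    (h : z ∈ SC δ γ w l) : z ∈ Lset δ γ := h.1

lemma SC_prefix {δ γ : Ordinal} {w : List SOrd} {l : Ordinal} {z : List SOrd}
    (h : z ∈ SC δ γ w l) : w <+: z := by
  rcases h.2 with rfl | ⟨_, h, _⟩ | ⟨_, h, _⟩
  · exact List.prefix_refl _
  · exact h
  · exact h

lemma SC_cases {δ γ : Ordinal} {w : List SOrd} {l : Ordinal} {z : List SOrd}
    (h : z ∈ SC δ γ w l) :
    z = w ∨ ∃ h : w.length < z.length, ∃ β ≤ l, z[w.length]'h = SOrd.pos β := by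
  rcases h.2 with rfl | ⟨h1, _, β, hβ, h2⟩ | ⟨h1, _, h2, _⟩
  · exact Or.inl rfl
  · exact Or.inr ⟨h1, β, le_of_lt hβ, h2⟩
  · exact Or.inr ⟨by omega, l, le_refl _, h2⟩

lemma stem_mem_SC {δ γ : Ordinal} {w : List SOrd} {l : Ordinal} (hw : w ∈ Lset δ γ) :
    w ∈ SC δ γ w l := ⟨hw, Or.inl rfl⟩

/-- Monotonicity in `l`. -/
lemma SC_mono {δ γ : Ordinal} {w : List SOrd} {l l' : Ordinal} (h : l < l') :
    SC δ γ w l ⊆ SC δ γ w l' := by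
  rintro z ⟨hz, hc⟩
  refine ⟨hz, ?_⟩
  rcases hc with rfl | ⟨h1, hp, β, hβ, h2⟩ | ⟨h1, hp, h2, h3⟩
  · exact Or.inl rfl
  · exact Or.inr (Or.inl ⟨h1, hp, β, lt_trans hβ h, h2⟩)
  · exact Or.inr (Or.inl ⟨by omega, hp, l, h, h2⟩)

lemma SC_mono_le {δ γ : Ordinal} {w : List SOrd} {l l' : Ordinal} (h : l ≤ l') :
    SC δ γ w l ⊆ SC δ γ w l' := by
  rcases eq_or_lt_of_le h with rfl | h
  · exact subset_rfl
  · exact SC_mono h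

/-- A stem-cone with a longer stem sitting inside the open part of a wider cone. -/
lemma SC_subset_of_stem {δ γ : Ordinal} {w w' : List SOrd} {l l' β : Ordinal}
    (hp : w <+: w') (hlen : w.length < w'.length)
    (hβ : w'[w.length]'hlen = SOrd.pos β) (hβl : β < l) :
    SC δ γ w' l' ⊆ SC δ γ w l := by
  intro z hz
  have hpz : w' <+: z := SC_prefix hz
  have hwz : w <+: z := hp.trans hpz
  have hlz : w.length < z.length := lt_of_lt_of_le hlen hpz.length_le
  refine ⟨SC_mem_Lset hz, Or.inr (Or.inl ⟨hlz, hwz, β, hβl, ?_⟩)⟩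
  rw [prefix_getElem hpz hlen, hβ]

/-- A stem-cone whose stem passes through the top value `pos l` followed by a
negative entry sits inside the closing part of the wider cone. -/
lemma SC_subset_of_stem_top {δ γ : Ordinal} {w w' : List SOrd} {l l' : Ordinal}
    (hp : w <+: w') (hlen : w.length + 1 < w'.length)
    (hl : w'[w.length]'(by omega) = SOrd.pos l)
    (hneg : ¬ SOrd.IsPos (w'[w.length + 1]'hlen)) :
    SC δ γ w' l' ⊆ SC δ γ w l := by
  intro z hz
  have hpz : w' <+: z := SC_prefix hz
  have hwz : w <+: z := hp.trans hpz
  have hlz : w.length + 1 < z.length := lt_of_lt_of_le hlen hpz.length_le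
  refine ⟨SC_mem_Lset hz, Or.inr (Or.inr ⟨hlz, hwz, ?_, ?_⟩)⟩
  · rw [prefix_getElem hpz (by omega : w.length < w'.length), hl]
  · rw [prefix_getElem hpz hlen]; exact hneg

end Refine

namespace Refine
open SOrd SOrdFacts ListFacts

lemma concat_getElem_left {w : List SOrd} {b : SOrd} {i : ℕ} (h : i < w.length) :
    (w ++ [b])[i]'(by simp; omega) = w[i] := List.getElem_append_left h

lemma concat_getElem_last (w : List SOrd) (b : SOrd) :
    (w ++ [b])[w.length]'(by simp) = b := by simp

lemma getElem_idx_eq (z : List SOrd) {i j : ℕ} (h : i = j) (hi : i < z.length) :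
    z[i]'hi = z[j]'(h ▸ hi) := by subst h; rfl

lemma take_of_prefix {x y : List SOrd} (h : x <+: y) : y.take x.length = x := by
  rw [← take_eq_of_prefix h le_rfl, List.take_length]

lemma concat_prefix {w z : List SOrd} {b : SOrd} (hp : w <+: z) (hl : w.length < z.length)
    (he : z[w.length]'hl = b) : w ++ [b] <+: z := by
  apply prefix_of_take_eq
  have h1 : (w ++ [b]).length = w.length + 1 := by simp
  rw [h1, ← List.take_concat_get' z w.length hl, take_of_prefix hp, he]

lemma Jset_concat_eq_SC {δ γ : Ordinal} {w : List SOrd} {l : Ordinal} :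
    Jset δ γ (w ++ [SOrd.pos l]) = SC δ γ w l := by
  set x := w ++ [SOrd.pos l] with hxdef
  have hxlen : x.length = w.length + 1 := by simp [hxdef]
  have htk : x.take (x.length - 1) = w := by
    rw [hxlen]; simp [hxdef]
  have hwx : w <+: x := ⟨[SOrd.pos l], rfl⟩
  have hxm : x[w.length]'(by omega) = SOrd.pos l := concat_getElem_last w _
  have hxi : ∀ i (h : i < w.length), x[i]'(by omega) = w[i] := fun i h => concat_getElem_left h
  ext z
  simp only [Jset, Set.mem_setOf_eq, htk]
  constructor
  · rintro ⟨hz, hge, hlt⟩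
    refine ⟨hz, ?_⟩
    rcases hge with rfl | hge
    · exact Or.inl rfl
    rcases hge with ⟨k, hkw, hkz, ht, hlt'⟩ | ⟨h1, ht, hp⟩ | ⟨h1, ht, hneg⟩
    · -- w and z differ at k < |w| : impossible given z < x
      exfalso
      have hwk : x[k]'(by omega) = w[k]'hkw := hxi k hkw
      rcases hlt with ⟨k', h1', h2', ht', hlt2⟩ | ⟨h1', ht', hp'⟩ | ⟨h1', ht', hneg'⟩
      · rcases lt_trichotomy k' k with hc | rfl | hc
        · have e1 : w[k']'(by omega) = z[k']'(by omega) :=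
            take_eq_getElem ht hc (by omega) (by omega)
          have e2 : x[k']'(by omega) = w[k']'(by omega) := hxi k' (by omega)
          rw [← e1, ← e2] at hlt2
          exact absurd hlt2 (lt_irrefl _)
        · rw [hwk] at hlt2
          exact absurd (hlt2.trans hlt') (lt_irrefl _)
        · have e1 : z[k]'(by omega) = x[k]'(by omega) :=
            take_eq_getElem ht' hc (by omega) (by omega)
          rw [e1, hwk] at hlt'
          exact absurd hlt' (lt_irrefl _)
      · have hzx : z <+: x := prefix_of_take_eq ht'
        have e1 : x[k]'(by omega) = z[k]'hkz := prefix_getElem hzx hkz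
        rw [← e1, hwk] at hlt'
        exact absurd hlt' (lt_irrefl _)
      · have hxz : x <+: z := prefix_of_take_eq ht'
        have e1 : z[k]'(by omega) = x[k]'(by omega) := prefix_getElem hxz (by omega)
        rw [e1, hwk] at hlt'
        exact absurd hlt' (lt_irrefl _)
    · -- w proper prefix of z with positive next entry
      have hwz : w <+: z := prefix_of_take_eq ht
      obtain ⟨β, hβ⟩ := hp
      rcases hlt with ⟨k', h1', h2', ht', hlt2⟩ | ⟨h1', ht', hp'⟩ | ⟨h1', ht', hneg'⟩
      · rcases lt_trichotomy k' w.length with hc | hc | hc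
        · exfalso
          have e1 : z[k']'(by omega) = w[k']'(by omega) := prefix_getElem hwz (by omega)
          have e2 : x[k']'(by omega) = w[k']'(by omega) := hxi k' (by omega)
          rw [e1, ← e2] at hlt2
          exact absurd hlt2 (lt_irrefl _)
        · -- chunk 2
          subst hc
          rw [hxm, hβ] at hlt2
          exact Or.inr (Or.inl ⟨h1, hwz, β, pos_lt_pos_iff.1 hlt2, hβ⟩)
        · exfalso; omega
      · exfalso; omega
      · -- chunk 3
        have hxz : x <+: z := prefix_of_take_eq ht'
        refine Or.inr (Or.inr ⟨by omega, hwz, ?_, ?_⟩)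
        · have e1 : z[w.length]'(by omega) = x[w.length]'(by omega) :=
            prefix_getElem hxz (by omega)
          rw [e1, hxm]
        · have e1 : z[w.length+1]'(by omega) = z[x.length]'(by omega) :=
            getElem_idx_eq z (by omega) (by omega)
          rw [e1]
          exact hneg'
    · -- z proper prefix of w with negative next entry : impossible given z < x
      exfalso
      have hzw : z <+: w := prefix_of_take_eq ht
      have hzx : z <+: x := hzw.trans hwx
      have e0 : w[z.length]'h1 = x[z.length]'(by omega) := (hxi z.length (by omega)).symm
      rcases hlt with ⟨k', h1', h2', ht', hlt2⟩ | ⟨h1', ht', hp'⟩ | ⟨h1', ht', hneg'⟩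
      · have e1 : z[k']'h1' = x[k']'(by omega) := (prefix_getElem hzx h1').symm
        rw [e1] at hlt2
        exact absurd hlt2 (lt_irrefl _)
      · rw [e0] at hneg
        exact hneg hp'
      · omega
  · rintro ⟨hz, hc⟩
    refine ⟨hz, ?_, ?_⟩
    · rcases hc with rfl | ⟨h1, hp, β, hβl, h2⟩ | ⟨h1, hp, h2, h3⟩
      · exact Or.inl rfl
      · exact Or.inr (Or.inr (Or.inl ⟨h1, take_of_prefix hp, h2 ▸ isPos_pos β⟩))
      · exact Or.inr (Or.inr (Or.inl ⟨by omega, take_of_prefix hp, h2 ▸ isPos_pos l⟩))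
    · rcases hc with rfl | ⟨h1, hp, β, hβl, h2⟩ | ⟨h1, hp, h2, h3⟩
      · exact Or.inr (Or.inl ⟨by omega, take_of_prefix hwx, hxm ▸ isPos_pos l⟩)
      · -- differ at index |w|
        refine Or.inl ⟨w.length, by omega, by omega, ?_, ?_⟩
        · rw [take_of_prefix hwx, take_of_prefix hp]
        · rw [h2, hxm]; exact pos_lt_pos_iff.2 hβl
      · -- z properly extends x, next entry negative
        have hxz : x <+: z := by
          rw [hxdef]; exact concat_prefix hp (by omega) h2
        refine Or.inr (Or.inr ⟨by omega, take_of_prefix hxz, ?_⟩)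
        have e1 : z[x.length]'(by omega) = z[w.length+1]'(by omega) :=
          getElem_idx_eq z (by omega) (by omega)
        rw [e1]
        exact h3

end Refine

namespace Refine
open SOrd SOrdFacts ListFacts

lemma eq_take_concat (x : List SOrd) (h : 0 < x.length) :
    x = x.take (x.length - 1) ++ [x[x.length - 1]'(by omega)] := by
  rw [List.take_concat_get']
  simp [Nat.sub_add_cancel h]

lemma take_mem_Lset {δ γ : Ordinal} {x : List SOrd} (hx : x ∈ Lset δ γ) {k : ℕ} (hk : 0 < k) :
    x.take k ∈ Lset δ γ := by
  obtain ⟨hne, ⟨h0, α, hαγ, he⟩, hbet⟩ := hx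
  have hxl : 0 < x.length := List.length_pos_iff.2 hne
  have hl : 0 < (x.take k).length := by simp [List.length_take]; omega
  refine ⟨by intro h; rw [h] at hl; simp at hl, ⟨hl, α, hαγ, ?_⟩, ?_⟩
  · rw [List.getElem_take]; exact he
  · intro j hj hj0
    rw [List.getElem_take]
    exact hbet j (by simp at hj; omega) hj0

lemma relevant_decomp {δ γ τ : Ordinal} {S : Ordinal → Set Ordinal} {y : List SOrd}
    (hy : Relevant δ γ τ S y) :
    ∃ (w : List SOrd) (l : Ordinal), y = w ++ [SOrd.pos l] ∧ l < τ ∧ l < δ ∧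
      2 ≤ w.length ∧ w.length % 2 = 0 ∧
      (∀ i (h : i < w.length), (SOrd.IsPos (w[i]'h) ↔ i % 2 = 0)) ∧ w ∈ Lset δ γ := by
  obtain ⟨hL, h3, hodd, halt, hcol, hlastr⟩ := hy
  obtain ⟨hlt, h2le, heven, hlastτ⟩ := hlastr
  have hpos : SOrd.IsPos (y[y.length - 1]'hlt) := (halt _ hlt).2 heven
  obtain ⟨l, hl⟩ := hpos
  refine ⟨y.take (y.length - 1), l, ?_, ?_, ?_, ?_, ?_, ?_, ?_⟩
  · rw [← hl]; exact eq_take_concat y (by omega)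
  · rw [hl] at hlastτ; exact pos_lt_pos_iff.1 hlastτ
  · have := (hL.2.2 (y.length - 1) hlt (by omega)).2
    rw [hl] at this; exact pos_lt_pos_iff.1 this
  · simp [List.length_take]; omega
  · simp [List.length_take]; omega
  · intro i h
    rw [List.getElem_take]
    exact halt i (by simp [List.length_take] at h; omega)
  · exact take_mem_Lset hL (by omega)

lemma relevant_replace {δ γ τ : Ordinal} {S : Ordinal → Set Ordinal} {w : List SOrd}
    {l Λ : Ordinal} (hy : Relevant δ γ τ S (w ++ [SOrd.pos l]))
    (hΛτ : Λ < τ) (hΛδ : Λ < δ) :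
    Relevant δ γ τ S (w ++ [SOrd.pos Λ]) := by
  obtain ⟨hL, h3, hodd, halt, hcol, hlastr⟩ := hy
  set y := w ++ [SOrd.pos l] with hydef
  set x := w ++ [SOrd.pos Λ] with hxdef
  have hylen : y.length = w.length + 1 := by simp [hydef]
  have hxlen : x.length = w.length + 1 := by simp [hxdef]
  have hyw : ∀ i (h : i < w.length), y[i]'(by omega) = w[i] := fun i h => concat_getElem_left h
  have hxw : ∀ i (h : i < w.length), x[i]'(by omega) = w[i] := fun i h => concat_getElem_left h
  have hym : y[w.length]'(by omega) = SOrd.pos l := concat_getElem_last w _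
  have hxm : x[w.length]'(by omega) = SOrd.pos Λ := concat_getElem_last w _
  have hw2 : 2 ≤ w.length := by omega
  have hweven : w.length % 2 = 0 := by omega
  have hylast : y[y.length - 1]'(by omega) = SOrd.pos l := by
    rw [getElem_idx_eq y (show y.length - 1 = w.length by omega)]; exact hym
  -- the last entry of y is < pos τ
  obtain ⟨hlt0, -, -, hlastτ⟩ := hlastr
  have hlτ : l < τ := by
    rw [hylast] at hlastτ; exact pos_lt_pos_iff.1 hlastτ
  -- rIdx agreement
  have hr : rIdx τ x = rIdx τ y := by
    ext i
    simp only [rIdx, Set.mem_setOf_eq]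
    constructor
    · rintro ⟨h, h2, he, hτ'⟩
      refine ⟨by omega, h2, he, ?_⟩
      rcases lt_or_eq_of_le (show i ≤ w.length by omega) with hc | hc
      · rw [hyw i hc, ← hxw i hc]; exact hτ'
      · subst hc; rw [hym]; exact pos_lt_pos_iff.2 hlτ
    · rintro ⟨h, h2, he, hτ'⟩
      refine ⟨by omega, h2, he, ?_⟩
      rcases lt_or_eq_of_le (show i ≤ w.length by omega) with hc | hc
      · rw [hxw i hc, ← hyw i hc]; exact hτ'
      · subst hc; rw [hxm]; exact pos_lt_pos_iff.2 hΛτ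
  refine ⟨?_, by omega, by omega, ?_, ?_, ?_⟩
  · -- Lset
    obtain ⟨hne, ⟨h0, α, hαγ, he⟩, hbet⟩ := hL
    refine ⟨by simp [hxdef], ⟨by omega, α, hαγ, ?_⟩, ?_⟩
    · rw [hxw 0 (by omega), ← hyw 0 (by omega)]; exact he
    · intro k hk hk0
      rcases lt_or_eq_of_le (show k ≤ w.length by omega) with hc | hc
      · rw [hxw k hc, ← hyw k hc]; exact hbet k (by omega) hk0
      · subst hc; rw [hxm]; exact isBetween_pos.2 hΛδ
  · -- alternation
    intro i hi
    rcases lt_or_eq_of_le (show i ≤ w.length by omega) with hc | hc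
    · rw [hxw i hc, ← hyw i hc]; exact halt i (by omega)
    · subst hc; rw [hxm]
      constructor
      · intro _; omega
      · intro _; exact isPos_pos Λ
  · -- colors
    intro i hi j hj hij hi' hj'
    rw [hr] at hi hj
    have hjmem := hj
    have himem := hi
    obtain ⟨hjlt, hj2, hje, -⟩ := hjmem
    obtain ⟨hilt, hi2, hie, -⟩ := himem
    have hjw : j - 1 < w.length := by omega
    have hiw : i - 1 < w.length := by omega
    have e1 : x[j-1]'hj' = y[j-1]'(by omega) := by rw [hxw _ hjw, hyw _ hjw]
    have e2 : x[i-1]'hi' = y[i-1]'(by omega) := by rw [hxw _ hiw, hyw _ hiw]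
    rw [e1, e2]
    exact hcol i hi j hj hij (by omega) (by omega)
  · -- last index
    refine ⟨by omega, by omega, by omega, ?_⟩
    rw [getElem_idx_eq x (show x.length - 1 = w.length by omega), hxm]
    exact pos_lt_pos_iff.2 hΛτ

end Refine

namespace Refine
open SOrd SOrdFacts ListFacts

lemma SC_comparable_core {δ γ : Ordinal} {w w' : List SOrd} {l l' : Ordinal}
    (hwe : w.length % 2 = 0) (hwe' : w'.length % 2 = 0)
    (halt' : ∀ i (h : i < w'.length), (SOrd.IsPos (w'[i]'h) ↔ i % 2 = 0))
    {z : List SOrd} (hz : z ∈ SC δ γ w l) (hz' : z ∈ SC δ γ w' l')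
    (hlen : w.length ≤ w'.length) :
    SC δ γ w l ⊆ SC δ γ w' l' ∨ SC δ γ w' l' ⊆ SC δ γ w l := by
  have hpz : w <+: z := SC_prefix hz
  have hpz' : w' <+: z := SC_prefix hz'
  have hww' : w <+: w' := List.prefix_of_prefix_length_le hpz hpz' hlen
  rcases eq_or_lt_of_le hlen with he | hlt
  · have : w = w' := List.IsPrefix.eq_of_length hww' he
    subst this
    rcases le_total l l' with h | h
    · exact Or.inl (SC_mono_le h)
    · exact Or.inr (SC_mono_le h)
  · rcases SC_cases hz with rfl | ⟨h1, β, hβle, hβ⟩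
    · exfalso
      have := hpz'.length_le
      omega
    · have hw' : w'[w.length]'hlt = SOrd.pos β := by
        rw [prefix_getElem hpz' hlt] at hβ
        exact hβ
      rcases lt_or_eq_of_le hβle with hc | rfl
      · exact Or.inr (SC_subset_of_stem hww' hlt hw' hc)
      · refine Or.inr (SC_subset_of_stem_top hww' (by omega) hw' ?_)
        intro hp
        rw [halt' (w.length + 1) (by omega)] at hp
        omega

lemma SC_comparable {δ γ : Ordinal} {w w' : List SOrd} {l l' : Ordinal}
    (hwe : w.length % 2 = 0) (hwe' : w'.length % 2 = 0)
    (halt : ∀ i (h : i < w.length), (SOrd.IsPos (w[i]'h) ↔ i % 2 = 0))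
    (halt' : ∀ i (h : i < w'.length), (SOrd.IsPos (w'[i]'h) ↔ i % 2 = 0))
    {z : List SOrd} (hz : z ∈ SC δ γ w l) (hz' : z ∈ SC δ γ w' l') :
    SC δ γ w l ⊆ SC δ γ w' l' ∨ SC δ γ w' l' ⊆ SC δ γ w l := by
  rcases le_total w.length w'.length with h | h
  · exact SC_comparable_core hwe hwe' halt' hz hz' h
  · exact (SC_comparable_core hwe' hwe halt hz' hz h).symm

lemma isLimit_of_cof {c : Ordinal} (h : Cardinal.aleph0 < c.cof) : Order.IsSuccLimit c :=
  Ordinal.aleph0_le_cof.1 h.le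

lemma one_lt_of_cof {c : Ordinal} (h : Cardinal.aleph0 < c.cof) : 1 < c :=
  lt_of_lt_of_le Ordinal.one_lt_omega0 (Ordinal.omega0_le_of_isSuccLimit (isLimit_of_cof h))

/-- `Lbelow δ γ α` always contains the two distinct points `[pos 0, neg 0]`, `[pos 0, neg 1]`. -/
lemma pair_mem_Lbelow {δ γ : Ordinal} (hγ : γ ≠ 0) (hδ : 1 < δ) (α : Ordinal) {ζ : Ordinal}
    (hζ : ζ < δ) : [SOrd.pos 0, SOrd.neg ζ] ∈ Lbelow δ γ α := by
  have hLs : [SOrd.pos 0, SOrd.neg ζ] ∈ Lset δ γ := by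
    refine ⟨by simp, ⟨by simp, 0, pos_iff_ne_zero.2 hγ, rfl⟩, ?_⟩
    intro k hk hk0
    simp at hk
    have hk1 : k = 1 := by omega
    subst hk1
    exact isBetween_neg.2 hζ
  refine ⟨hLs, ?_⟩
  rcases eq_or_ne α 0 with rfl | hα
  · -- clause (iii)
    exact Or.inr (Or.inr ⟨by simp, by simp, not_isPos_neg ζ⟩)
  · -- clause (i)
    refine Or.inl ⟨0, by simp, by simp, by simp, ?_⟩
    show SOrd.pos 0 < SOrd.pos α
    exact pos_lt_pos_iff.2 (pos_iff_ne_zero.2 hα)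

lemma SC_ne_Lbelow {δ γ : Ordinal} (hγ : γ ≠ 0) (hδ : 1 < δ) {w : List SOrd} {l α : Ordinal}
    (hw2 : 2 ≤ w.length) : SC δ γ w l ≠ Lbelow δ γ α := by
  intro he
  have h1 : [SOrd.pos 0, SOrd.neg 0] ∈ SC δ γ w l := he ▸ pair_mem_Lbelow hγ hδ α (zero_lt_one.trans hδ)
  have h2 : [SOrd.pos 0, SOrd.neg 1] ∈ SC δ γ w l := he ▸ pair_mem_Lbelow hγ hδ α hδ
  have e1 : [SOrd.pos 0, SOrd.neg 0] = w := by
    rcases SC_cases h1 with h | ⟨h, _⟩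
    · exact h
    · exfalso; have := (SC_prefix h1).length_le; simp at this h; omega
  have e2 : [SOrd.pos 0, SOrd.neg 1] = w := by
    rcases SC_cases h2 with h | ⟨h, _⟩
    · exact h
    · exfalso; have := (SC_prefix h2).length_le; simp at this h; omega
  rw [← e2] at e1
  simp at e1
  exact absurd (neg_injective e1) zero_ne_one

lemma singleton_ne_Lbelow {δ γ : Ordinal} (hγ : γ ≠ 0) (hδ : 1 < δ) (u : List SOrd)
    (α : Ordinal) : ({u} : Set (List SOrd)) ≠ Lbelow δ γ α := by
  intro he
  have h1 : [SOrd.pos 0, SOrd.neg 0] ∈ ({u} : Set (List SOrd)) :=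
    he ▸ pair_mem_Lbelow hγ hδ α (zero_lt_one.trans hδ)
  have h2 : [SOrd.pos 0, SOrd.neg 1] ∈ ({u} : Set (List SOrd)) :=
    he ▸ pair_mem_Lbelow hγ hδ α hδ
  simp only [Set.mem_singleton_iff] at h1 h2
  rw [← h2] at h1
  simp at h1
  exact absurd (neg_injective h1) zero_ne_one

end Refine

namespace Refine
open SOrd SOrdFacts ListFacts

lemma SC_subset_K {δ γ : Ordinal} {a : List SOrd} (ha2 : 2 ≤ a.length)
    (halast : ∀ h : a.length - 1 < a.length, a[a.length - 1]'h = SOrd.pos 0)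
    {K : Set (List SOrd)} (hK : K = bracketNeg δ γ a ∨ K = bracketPos δ γ a)
    {w : List SOrd} {l : Ordinal} (hwK : w ∈ K) : SC δ γ w l ⊆ K := by
  intro z hz
  rcases SC_cases hz with rfl | ⟨h1, β, hβle, hβ⟩
  · exact hwK
  have hp : w <+: z := SC_prefix hz
  have hzL : z ∈ Lset δ γ := SC_mem_Lset hz
  rcases hK with rfl | rfl
  · obtain ⟨hwL, hlen, htk, hh1, hh2, hhlt⟩ := hwK
    have hlen2 : a.length - 1 ≤ w.length := by omega
    refine ⟨hzL, by omega, ?_, by omega, hh2, ?_⟩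
    · rw [← take_eq_of_prefix hp hlen2]; exact htk
    · rw [prefix_getElem hp (show a.length - 1 < w.length by omega)]
      exact hhlt
  · obtain ⟨⟨hwL, hlen1, htk⟩, hnB⟩ := hwK
    have hlz : a.length - 1 ≤ w.length := hlen1
    constructor
    · refine ⟨hzL, by omega, ?_⟩
      rw [← take_eq_of_prefix hp hlz]; exact htk
    · rintro ⟨hzL2, hlen2, htk2, hh1, hh2, hhlt⟩
      rw [halast hh2] at hhlt
      rcases eq_or_lt_of_le hlz with hcase | hcase
      · rw [getElem_idx_eq z hcase, hβ] at hhlt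
        exact absurd (pos_lt_pos_iff.1 hhlt) (by simp : ¬ β < 0)
      · rw [prefix_getElem hp hcase] at hhlt
        exact hnB ⟨hwL, by omega, htk, by omega, hh2, by rw [halast hh2]; exact hhlt⟩

/-- Specification of the data of a good (basic, non-initial-segment) set. -/
def SCdata (δ γ τ : Ordinal) (S : Ordinal → Set Ordinal) (w : List SOrd) (l : Ordinal) : Prop :=
  w ∈ Lset δ γ ∧ 2 ≤ w.length ∧ w.length % 2 = 0 ∧
    (∀ i (h : i < w.length), (SOrd.IsPos (w[i]'h) ↔ i % 2 = 0)) ∧ l < τ ∧ l < δ ∧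
    Relevant δ γ τ S (w ++ [SOrd.pos l])

lemma good_structure {δ γ τ : Ordinal} {S : Ordinal → Set Ordinal} {H : Set (List SOrd)}
    (hb : IsBasic δ γ τ S H) (hni : ¬ IsInitialSegmentBasic δ γ H) :
    (∃ u, u ∈ Lset δ γ ∧ H = {u}) ∨
    (∃ w l, SCdata δ γ τ S w l ∧ H = SC δ γ w l) := by
  rcases hb with h | ⟨y, hy, rfl⟩ | ⟨u, hu, rfl⟩
  · exact absurd h hni
  · right
    obtain ⟨w, l, hdec, hlτ, hlδ, hw2, hwe, halt, hwL⟩ := relevant_decomp hy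
    rw [hdec] at hy ⊢
    exact ⟨w, l, ⟨hwL, hw2, hwe, halt, hlτ, hlδ, hy⟩, Jset_concat_eq_SC⟩
  · exact Or.inl ⟨u, hu, rfl⟩

lemma good_nonempty {δ γ τ : Ordinal} {S : Ordinal → Set Ordinal} {H : Set (List SOrd)}
    (hb : IsBasic δ γ τ S H) (hni : ¬ IsInitialSegmentBasic δ γ H) : H.Nonempty := by
  rcases good_structure hb hni with ⟨u, -, rfl⟩ | ⟨w, l, hd, rfl⟩
  · exact ⟨u, rfl⟩
  · exact ⟨w, stem_mem_SC hd.1⟩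

lemma good_comparable {δ γ τ : Ordinal} {S : Ordinal → Set Ordinal} {H H' : Set (List SOrd)}
    (hb : IsBasic δ γ τ S H) (hni : ¬ IsInitialSegmentBasic δ γ H)
    (hb' : IsBasic δ γ τ S H') (hni' : ¬ IsInitialSegmentBasic δ γ H')
    (hzz : (H ∩ H').Nonempty) : H ⊆ H' ∨ H' ⊆ H := by
  obtain ⟨z, hzH, hzH'⟩ := hzz
  rcases good_structure hb hni with ⟨u, -, rfl⟩ | ⟨w, l, hd, rfl⟩
  · rcases Set.mem_singleton_iff.1 hzH with rfl
    exact Or.inl (Set.singleton_subset_iff.2 hzH')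
  · rcases good_structure hb' hni' with ⟨u', -, rfl⟩ | ⟨w', l', hd', rfl⟩
    · rcases Set.mem_singleton_iff.1 hzH' with rfl
      exact Or.inr (Set.singleton_subset_iff.2 hzH)
    · exact SC_comparable hd.2.2.1 hd'.2.2.1 hd.2.2.2.1 hd'.2.2.2.1 hzH hzH'

/-- MAIN: a countable family of good subsets of `K` with a common point is
covered by a single good subset of `K`. -/
lemma countable_bound {δ γ τ : Ordinal} {S : Ordinal → Set Ordinal} (hγ : γ ≠ 0)
    (hδcof : Cardinal.aleph0 < δ.cof) (hτcof : Cardinal.aleph0 < τ.cof)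
    {a : List SOrd} (ha2 : 2 ≤ a.length)
    (halast : ∀ h : a.length - 1 < a.length, a[a.length - 1]'h = SOrd.pos 0)
    {K : Set (List SOrd)} (hK : K = bracketNeg δ γ a ∨ K = bracketPos δ γ a)
    {𝒜 : Set (Set (List SOrd))} (hcnt : 𝒜.Countable)
    (hgood : ∀ H ∈ 𝒜, IsBasic δ γ τ S H ∧ H ⊆ K ∧ ¬ IsInitialSegmentBasic δ γ H)
    (hne : 𝒜.Nonempty) {z : List SOrd} (hz : ∀ H ∈ 𝒜, z ∈ H) :
    ∃ D, (IsBasic δ γ τ S D ∧ D ⊆ K ∧ ¬ IsInitialSegmentBasic δ γ D) ∧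
      ∀ H ∈ 𝒜, H ⊆ D := by
  classical
  by_cases hallsing : ∀ H ∈ 𝒜, ∃ u, u ∈ Lset δ γ ∧ H = {u}
  · obtain ⟨H0, hH0⟩ := hne
    refine ⟨H0, hgood H0 hH0, ?_⟩
    intro H hH
    obtain ⟨u, -, rfl⟩ := hallsing H hH
    obtain ⟨u0, -, rfl⟩ := hallsing H0 hH0
    rcases Set.mem_singleton_iff.1 (hz _ hH) with rfl
    rcases Set.mem_singleton_iff.1 (hz _ hH0) with rfl
    exact subset_rfl
  · push_neg at hallsing
    obtain ⟨H0, hH0, hH0ns⟩ := hallsing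
    obtain ⟨w0, l0, hd0, hH0eq⟩ :=
      (good_structure (hgood H0 hH0).1 (hgood H0 hH0).2.2).resolve_left
        (fun h => by obtain ⟨u, hu, he⟩ := h; exact hH0ns u hu he)
    -- every member of `𝒜` is inside a good stem-cone subset of `K` whose stem is a prefix of `z`
    have key : ∀ H ∈ 𝒜, ∃ w l, SCdata δ γ τ S w l ∧ H ⊆ SC δ γ w l ∧
        SC δ γ w l ⊆ K ∧ w <+: z ∧ w ∈ K := by
      intro H hH
      have hgH := hgood H hH
      rcases good_structure hgH.1 hgH.2.2 with ⟨u, -, rfl⟩ | ⟨w, l, hd, rfl⟩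
      · refine ⟨w0, l0, hd0, ?_, ?_, ?_, ?_⟩
        · rcases Set.mem_singleton_iff.1 (hz _ hH) with rfl
          exact Set.singleton_subset_iff.2 (hH0eq ▸ hz _ hH0)
        · exact hH0eq ▸ (hgood H0 hH0).2.1
        · exact SC_prefix (hH0eq ▸ hz _ hH0)
        · exact (hH0eq ▸ (hgood H0 hH0).2.1) (stem_mem_SC hd0.1)
      · refine ⟨w, l, hd, subset_rfl, hgH.2.1, SC_prefix (hz _ hH), ?_⟩
        exact hgH.2.1 (stem_mem_SC hd.1)
    obtain ⟨g, hgeq⟩ := Set.Countable.exists_eq_range hcnt hne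
    have hgmem : ∀ n, g n ∈ 𝒜 := fun n => hgeq ▸ Set.mem_range_self n
    have key' : ∀ n : ℕ, ∃ w l, SCdata δ γ τ S w l ∧ g n ⊆ SC δ γ w l ∧
        SC δ γ w l ⊆ K ∧ w <+: z ∧ w ∈ K := fun n => key (g n) (hgmem n)
    choose W L hdata hsub hSCK hpre hwK using key'
    -- minimal stem
    have hsne : ({k : ℕ | ∃ n, (W n).length = k}).Nonempty := ⟨(W 0).length, 0, rfl⟩
    obtain ⟨n0, hn0⟩ := Nat.sInf_mem hsne
    have hmin : ∀ n, (W n0).length ≤ (W n).length := by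
      intro n
      rw [hn0]
      exact Nat.sInf_le ⟨n, rfl⟩
    -- bound on the cone heights
    set Λ := ⨆ n, Order.succ (L n) with hΛ
    have hΛgt : ∀ n, L n < Λ := by
      intro n
      exact lt_of_lt_of_le (Order.lt_succ (L n)) (Ordinal.le_iSup _ n)
    have hΛτ : Λ < τ := by
      apply Ordinal.iSup_lt_ord (by rw [Cardinal.mk_nat]; exact hτcof)
      intro n
      exact (isLimit_of_cof hτcof).succ_lt (hdata n).2.2.2.2.1
    have hΛδ : Λ < δ := by
      apply Ordinal.iSup_lt_ord (by rw [Cardinal.mk_nat]; exact hδcof)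
      intro n
      exact (isLimit_of_cof hδcof).succ_lt (hdata n).2.2.2.2.2.1
    have hrel : Relevant δ γ τ S (W n0 ++ [SOrd.pos Λ]) :=
      relevant_replace (hdata n0).2.2.2.2.2.2 hΛτ hΛδ
    refine ⟨SC δ γ (W n0) Λ, ⟨?_, ?_, ?_⟩, ?_⟩
    · exact Or.inr (Or.inl ⟨W n0 ++ [SOrd.pos Λ], hrel, Jset_concat_eq_SC.symm⟩)
    · exact SC_subset_K ha2 halast hK (hwK n0)
    · rintro ⟨α, hαγ, hD⟩
      exact SC_ne_Lbelow hγ (one_lt_of_cof hδcof) (hdata n0).2.1 hD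
    · intro H hH
      obtain ⟨n, rfl⟩ := hgeq ▸ hH
      refine (hsub n).trans ?_
      rcases eq_or_lt_of_le (hmin n) with hlen | hlen
      · have hWeq : W n0 = W n :=
          List.IsPrefix.eq_of_length (List.prefix_of_prefix_length_le (hpre n0) (hpre n) (by omega)) hlen
        rw [← hWeq]
        exact SC_mono (hΛgt n)
      · have hp0n : W n0 <+: W n :=
          List.prefix_of_prefix_length_le (hpre n0) (hpre n) (le_of_lt hlen)
        have hzS : z ∈ SC δ γ (W n0) (L n0) := hsub n0 (hz _ (hgmem n0))
        rcases SC_cases hzS with hc | ⟨hlz, β, hβle, hβ⟩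
        · exfalso
          have := (hpre n).length_le
          rw [hc] at this
          omega
        · have hWn : (W n)[(W n0).length]'hlen = SOrd.pos β := by
            rw [prefix_getElem (hpre n) hlen] at hβ
            exact hβ
          exact SC_subset_of_stem hp0n hlen hWn (lt_of_le_of_lt hβle (hΛgt n0))

end Refine

/-- Any countable collection of basic sets contained in `[a]⁻` (none an initial
segment of `L^{δ,γ}`), where `a(|a|-1) = 0` and `|a| ≥ 2`, admits a countable
pairwise-disjoint refinement by basic sets contained in `[a]⁻` satisfying
(a)–(d); and the same holds for `[a]⁺`. -/
theorem disjoint_refinement (δ γ τ : Ordinal) (hδ : δ ≠ 0) (hγ : γ ≠ 0) (hτ : τ ≠ 0)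
    (hδcof : Cardinal.aleph0 < δ.cof) (hτcof : Cardinal.aleph0 < τ.cof)
    (S : Ordinal → Set Ordinal) (hS : IsPartition δ τ S)
    (a : List SOrd) (ha : a ∈ Lset δ γ) (ha2 : 2 ≤ a.length)
    (halast : ∀ h : a.length - 1 < a.length, a[a.length - 1]'h = SOrd.pos 0) :
    ∀ K, (K = bracketNeg δ γ a ∨ K = bracketPos δ γ a) →
      ∀ 𝓑 : Set (Set (List SOrd)), 𝓑.Countable →
        (∀ C ∈ 𝓑, IsBasic δ γ τ S C ∧ C ⊆ K ∧ ¬ IsInitialSegmentBasic δ γ C) →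
        HasDisjointRefinement δ γ τ S K 𝓑 := by
  classical
  intro K hK 𝓑 hBcnt hB
  rcases Set.eq_empty_or_nonempty 𝓑 with rfl | hBne
  · exact ⟨∅, Set.countable_empty, by simp, Set.pairwise_empty _, by simp, by simp,
      by simp, by simp⟩
  set Good : Set (Set (List SOrd)) :=
    {H | IsBasic δ γ τ S H ∧ H ⊆ K ∧ ¬ IsInitialSegmentBasic δ γ H} with hGoodDef
  have hBGood : ∀ C ∈ 𝓑, C ∈ Good := fun C hC => hB C hC
  have hGoodNe : ∀ H ∈ Good, H.Nonempty := fun H hH => Refine.good_nonempty hH.1 hH.2.2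
  have hGoodComp : ∀ H ∈ Good, ∀ H' ∈ Good, (H ∩ H').Nonempty → H ⊆ H' ∨ H' ⊆ H :=
    fun H hH H' hH' => Refine.good_comparable hH.1 hH.2.2 hH'.1 hH'.2.2
  set R : Set (List SOrd) → Set (List SOrd) → Prop :=
    fun C C' => ∃ H ∈ Good, C ⊆ H ∧ C' ⊆ H with hRdef
  have hRsymm : ∀ {C C'}, R C C' → R C' C := by
    rintro C C' ⟨H, h1, h2, h3⟩; exact ⟨H, h1, h3, h2⟩
  have hRrefl : ∀ C ∈ 𝓑, R C C := fun C hC => ⟨C, hBGood C hC, subset_rfl, subset_rfl⟩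
  have hRtrans : ∀ {C C' C''}, C' ∈ 𝓑 → R C C' → R C' C'' → R C C'' := by
    rintro C C' C'' hC' ⟨H, hH, h1, h2⟩ ⟨H', hH', h3, h4⟩
    have hne' : (H ∩ H').Nonempty := by
      obtain ⟨u, hu⟩ := hGoodNe C' (hBGood C' hC')
      exact ⟨u, h2 hu, h3 hu⟩
    rcases hGoodComp H hH H' hH' hne' with hs | hs
    · exact ⟨H', hH', h1.trans hs, h4⟩
    · exact ⟨H, hH, h1, h4.trans hs⟩
  -- one good set covering each equivalence class
  have key : ∀ C, ∃ D, C ∈ 𝓑 → (D ∈ Good ∧ ∀ C' ∈ 𝓑, R C C' → C' ⊆ D) := by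
    intro C
    by_cases hC : C ∈ 𝓑
    swap
    · exact ⟨∅, fun h => absurd h hC⟩
    have hwit : ∀ C', ∃ H, (C' ∈ 𝓑 ∧ R C C') → (H ∈ Good ∧ C ⊆ H ∧ C' ⊆ H) := by
      intro C'
      by_cases h : C' ∈ 𝓑 ∧ R C C'
      · obtain ⟨H, hH, h1, h2⟩ := h.2
        exact ⟨H, fun _ => ⟨hH, h1, h2⟩⟩
      · exact ⟨∅, fun hh => absurd hh h⟩
    choose Wit hWit using hwit
    set 𝒜 : Set (Set (List SOrd)) := Wit '' {C' | C' ∈ 𝓑 ∧ R C C'} with h𝒜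
    have h𝒜cnt : 𝒜.Countable := (hBcnt.mono (fun _ h => h.1)).image Wit
    have h𝒜good : ∀ H ∈ 𝒜, IsBasic δ γ τ S H ∧ H ⊆ K ∧ ¬ IsInitialSegmentBasic δ γ H := by
      rintro H ⟨C', hC', rfl⟩
      exact (hWit C' hC').1
    have h𝒜ne : 𝒜.Nonempty := ⟨Wit C, ⟨C, ⟨hC, hRrefl C hC⟩, rfl⟩⟩
    obtain ⟨z0, hz0⟩ := hGoodNe C (hBGood C hC)
    have hzcom : ∀ H ∈ 𝒜, z0 ∈ H := by
      rintro H ⟨C', hC', rfl⟩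
      exact (hWit C' hC').2.1 hz0
    obtain ⟨D, hDgood, hDsup⟩ :=
      Refine.countable_bound hγ hδcof hτcof ha2 halast hK h𝒜cnt h𝒜good h𝒜ne hzcom
    refine ⟨D, fun _ => ⟨hDgood, fun C' hC' hR => ?_⟩⟩
    exact ((hWit C' ⟨hC', hR⟩).2.2).trans (hDsup (Wit C') ⟨C', ⟨hC', hR⟩, rfl⟩)
  choose Dof hDof using key
  obtain ⟨f, hfeq⟩ := Set.Countable.exists_eq_range hBcnt hBne
  have hfmem : ∀ n, f n ∈ 𝓑 := fun n => hfeq ▸ Set.mem_range_self n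
  have hidx : ∀ C ∈ 𝓑, ∃ n, R (f n) C := by
    intro C hC
    rw [hfeq] at hC
    obtain ⟨n, rfl⟩ := hC
    exact ⟨n, hRrefl _ (hfmem n)⟩
  set rep : Set (List SOrd) → Set (List SOrd) := fun C => f (sInf {n | R (f n) C}) with hrep
  have hrepR : ∀ C ∈ 𝓑, R (rep C) C := fun C hC => Nat.sInf_mem (hidx C hC)
  have hrepconst : ∀ C ∈ 𝓑, ∀ C' ∈ 𝓑, R C C' → rep C = rep C' := by
    intro C hC C' hC' hR
    have he : {n | R (f n) C} = {n | R (f n) C'} := by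
      ext n
      constructor
      · intro h; exact hRtrans hC h hR
      · intro h; exact hRtrans hC' h (hRsymm hR)
    show f (sInf {n | R (f n) C}) = f (sInf {n | R (f n) C'})
    rw [he]
  set Dfun : Set (List SOrd) → Set (List SOrd) := fun C => Dof (rep C) with hDfundef
  have hDfun : ∀ C ∈ 𝓑, Dfun C ∈ Good ∧ C ⊆ Dfun C ∧
      ∀ C' ∈ 𝓑, R C C' → C' ⊆ Dfun C := by
    intro C hC
    obtain ⟨hg, hall⟩ := hDof (rep C) (hfmem _)
    exact ⟨hg, hall C hC (hrepR C hC),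
      fun C' hC' hR => hall C' hC' (hRtrans hC (hrepR C hC) hR)⟩
  have hDconst : ∀ C ∈ 𝓑, ∀ C' ∈ 𝓑, R C C' → Dfun C = Dfun C' := by
    intro C hC C' hC' hR
    show Dof (rep C) = Dof (rep C')
    rw [hrepconst C hC C' hC' hR]
  have hRof : ∀ C ∈ 𝓑, ∀ C' ∈ 𝓑, ∀ H, H ∈ Good → C ⊆ H → C' ⊆ H → Dfun C = Dfun C' :=
    fun C hC C' hC' H hH h1 h2 => hDconst C hC C' hC' ⟨H, hH, h1, h2⟩
  have hpair : (Dfun '' 𝓑).Pairwise Disjoint := by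
    rintro D ⟨C, hC, rfl⟩ D' ⟨C', hC', rfl⟩ hne'
    by_contra hdis
    rw [Set.not_disjoint_iff] at hdis
    obtain ⟨u, hu1, hu2⟩ := hdis
    rcases hGoodComp (Dfun C) (hDfun C hC).1 (Dfun C') (hDfun C' hC').1 ⟨u, hu1, hu2⟩ with hs | hs
    · exact hne' (hRof C hC C' hC' (Dfun C') (hDfun C' hC').1
        ((hDfun C hC).2.1.trans hs) (hDfun C' hC').2.1)
    · exact hne' (hRof C hC C' hC' (Dfun C) (hDfun C hC).1
        (hDfun C hC).2.1 ((hDfun C' hC').2.1.trans hs))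
  refine ⟨Dfun '' 𝓑, hBcnt.image _, ?_, hpair, ?_, ?_, ?_, ?_⟩
  · rintro D ⟨C, hC, rfl⟩
    exact ⟨(hDfun C hC).1.1, (hDfun C hC).1.2.1⟩
  · intro C hC
    refine ⟨Dfun C, ⟨Set.mem_image_of_mem _ hC, (hDfun C hC).2.1⟩, ?_⟩
    rintro D' ⟨hD'mem, hsub⟩
    by_contra hne'
    have hd : Disjoint D' (Dfun C) := hpair hD'mem (Set.mem_image_of_mem _ hC) hne'
    obtain ⟨u, hu⟩ := hGoodNe C (hBGood C hC)
    exact Set.disjoint_left.1 hd (hsub hu) ((hDfun C hC).2.1 hu)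
  · rintro D ⟨C, hC, rfl⟩
    exact ⟨C, hC, (hDfun C hC).2.1⟩
  · rintro D ⟨C, hC, rfl⟩
    exact (hDfun C hC).1.2.2
  · rintro D ⟨C, hC, rfl⟩ D' ⟨C', hC', rfl⟩ hne' H hbasic hHK hHni ⟨h1, h2⟩
    exact hne' (hRof C hC C' hC' H ⟨hbasic, hHK, hHni⟩
      ((hDfun C hC).2.1.trans h1) ((hDfun C' hC').2.1.trans h2))
end

section
/- Let γ, δ, τ be nonzero ordinals with δ and τ of uncountable cofinality, and Σ = ⟨S_β : β < τ⟩ a partition of δ*. If A ∈ I^{Σ,γ} is nonempty and has a maximum element x, then A ∩ L^{δ,γ}_x ∈ I^{Σ,γ}_x (equivalently, A ∖ {x} ∈ I^{Σ,γ}). In particular, the only basic sets of I^{Σ,γ} that have a maximum element are the singletons. -/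
open Ordinal Cardinal

namespace RemoveMaxAux

lemma sord_not_isPos_neg (a : Ordinal) : ¬ SOrd.IsPos (SOrd.neg a) := by
  rintro ⟨α, h⟩
  exact Sum.inl_ne_inr (congrArg (ofLex : SOrd → Ordinalᵒᵈ ⊕ Ordinal) h)

lemma sord_isPos_pos (a : Ordinal) : SOrd.IsPos (SOrd.pos a) := ⟨a, rfl⟩

lemma sord_lt_of_not_isPos {a b : SOrd} (ha : ¬ a.IsPos) (hb : b.IsPos) : a < b := by
  obtain ⟨β, rfl⟩ := hb
  rcases a with c | c
  · exact Sum.Lex.inl_lt_inr _ _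
  · exact absurd ⟨c, rfl⟩ ha

lemma isBetween_pos0 {δ : Ordinal} (hδ : δ ≠ 0) : IsBetween δ (SOrd.pos 0) :=
  ⟨Sum.Lex.inl_lt_inr _ _, Sum.Lex.inr_lt_inr_iff.mpr (pos_iff_ne_zero.mpr hδ)⟩

lemma isBetween_neg0 {δ : Ordinal} (hδ : δ ≠ 0) : IsBetween δ (SOrd.neg 0) :=
  ⟨Sum.Lex.inl_lt_inl_iff.mpr (pos_iff_ne_zero.mpr hδ), Sum.Lex.inl_lt_inr _ _⟩

lemma concat_take {x : List SOrd} (c : SOrd) {k : ℕ} (h : k ≤ x.length) :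
    (x ++ [c]).take k = x.take k := List.take_append_of_le_length h

lemma concat_take_self (x : List SOrd) (c : SOrd) : (x ++ [c]).take x.length = x := by
  rw [concat_take c le_rfl, List.take_length]

lemma concat_len (x : List SOrd) (c : SOrd) : x.length < (x ++ [c]).length := by simp

lemma concat_get {x : List SOrd} (c : SOrd) {k : ℕ} (h : k < x.length) :
    (x ++ [c])[k]'(by simp; omega) = x[k]'h := List.getElem_append_left h

lemma concat_get_last (x : List SOrd) (c : SOrd) :
    (x ++ [c])[x.length]'(concat_len x c) = c := by simp

lemma take_take_get {x y : List SOrd} {m : ℕ} (h : x.take m = y.take m) {k : ℕ}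
    (hk : k < m) (hx : k < x.length) (hy : k < y.length) : x[k]'hx = y[k]'hy := by
  have h1 : (x.take m)[k]'(by simp [List.length_take]; omega) = x[k]'hx := List.getElem_take
  have h2 : (y.take m)[k]'(by simp [List.length_take]; omega) = y[k]'hy := List.getElem_take
  rw [← h1, ← h2]
  simp only [h]

lemma take_prefix_take {w x : List SOrd} (h : w.take x.length = x) {k : ℕ}
    (hk : k ≤ x.length) : w.take k = x.take k := by
  rw [← h, List.take_take, min_eq_left hk]

lemma take_prefix_get {w x : List SOrd} (h : w.take x.length = x) {k : ℕ}
    (hk : k < x.length) (hw : k < w.length) : w[k]'hw = x[k]'hk := by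
  have h' : w.take x.length = x.take x.length := by rw [h, List.take_length]
  exact take_take_get h' hk hw hk

lemma Llt_irrefl (x : List SOrd) : ¬ Llt x x := by
  rintro (⟨k, hx, hy, -, hlt⟩ | ⟨h, -, -⟩ | ⟨h, -, -⟩)
  · exact lt_irrefl _ hlt
  · exact lt_irrefl _ h
  · exact lt_irrefl _ h

lemma Llt_asymm {x y : List SOrd} (h1 : Llt x y) (h2 : Llt y x) : False := by
  obtain ⟨k, hxk, hyk, ht, hl⟩ | ⟨hl, ht, hp⟩ | ⟨hl, ht, hp⟩ := h1
  · obtain ⟨k', hyk', hxk', ht', hl'⟩ | ⟨hl', ht', hp'⟩ | ⟨hl', ht', hp'⟩ := h2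
    · rcases lt_trichotomy k k' with h | rfl | h
      · have heq := take_take_get ht' h hyk hxk
        rw [heq] at hl
        exact lt_irrefl _ hl
      · exact lt_asymm hl hl'
      · have heq := take_take_get ht h hxk' hyk'
        rw [heq] at hl'
        exact lt_irrefl _ hl'
    · have heq := take_take_get (ht'.trans (List.take_length : y.take y.length = y).symm) hyk hxk hyk
      rw [heq] at hl
      exact lt_irrefl _ hl
    · have heq := take_take_get (ht'.trans (List.take_length : x.take x.length = x).symm) hxk hyk hxk
      rw [heq] at hl
      exact lt_irrefl _ hl
  · obtain ⟨k', hyk', hxk', ht', hl'⟩ | ⟨hl', ht', hp'⟩ | ⟨hl', ht', hp'⟩ := h2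
    · have heq := take_take_get (ht.trans (List.take_length : x.take x.length = x).symm) hxk' hyk' hxk'
      rw [heq] at hl'
      exact lt_irrefl _ hl'
    · omega
    · exact hp' hp
  · obtain ⟨k', hyk', hxk', ht', hl'⟩ | ⟨hl', ht', hp'⟩ | ⟨hl', ht', hp'⟩ := h2
    · have heq := take_take_get (ht.trans (List.take_length : y.take y.length = y).symm) hyk' hxk' hyk'
      rw [heq] at hl'
      exact lt_irrefl _ hl'
    · exact hp hp'
    · omega

lemma Llt_ext {p x w : List SOrd} (hp : x = p ∨ Llt p x)
    (hw : w.take x.length = x) (hlen : x.length < w.length)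
    (hpos : SOrd.IsPos (w[x.length]'hlen)) : Llt p w := by
  rcases hp with rfl | hp
  · exact Or.inr (Or.inl ⟨hlen, hw, hpos⟩)
  obtain ⟨k, hpk, hxk, ht, hl⟩ | ⟨hl, ht, hp'⟩ | ⟨hl, ht, hp'⟩ := hp
  · refine Or.inl ⟨k, hpk, by omega, ?_, ?_⟩
    · exact ht.trans (take_prefix_take hw hxk.le).symm
    · rw [take_prefix_get hw hxk (by omega)]
      exact hl
  · refine Or.inr (Or.inl ⟨by omega, ?_, ?_⟩)
    · rw [take_prefix_take hw hl.le]
      exact ht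
    · rw [take_prefix_get hw hl (by omega)]
      exact hp'
  · refine Or.inl ⟨x.length, hl, hlen, ht.trans hw.symm, ?_⟩
    exact sord_lt_of_not_isPos hp' hpos

lemma llt_concat_pos (x : List SOrd) (c : Ordinal) : Llt x (x ++ [SOrd.pos c]) :=
  Llt_ext (Or.inl rfl) (concat_take_self x _) (concat_len x _)
    (by rw [concat_get_last]; exact ⟨c, rfl⟩)

lemma llt_concat_neg (x : List SOrd) (c : Ordinal) : Llt (x ++ [SOrd.neg c]) x :=
  Or.inr (Or.inr ⟨concat_len x _, concat_take_self x _,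
    by rw [concat_get_last]; exact sord_not_isPos_neg c⟩)

lemma Lset_append {δ γ : Ordinal} {z : List SOrd} (hz : z ∈ Lset δ γ) {c : SOrd}
    (hc : IsBetween δ c) : z ++ [c] ∈ Lset δ γ := by
  obtain ⟨hne, ⟨h0, α, hα, hz0⟩, hall⟩ := hz
  have hzl : 0 < z.length := List.length_pos_iff.mpr hne
  refine ⟨by simp, ⟨by simp, α, hα, ?_⟩, ?_⟩
  · rw [concat_get c hzl]
    exact hz0
  · intro k h hk
    rcases Nat.lt_or_ge k z.length with h' | h'
    · rw [concat_get c h']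
      exact hall k h' hk
    · have hkz : k = z.length := by simp at h; omega
      subst hkz
      rw [concat_get_last]
      exact hc

lemma basic_sub {δ γ τ : Ordinal} {S : Ordinal → Set Ordinal} {B : Set (List SOrd)}
    (h : IsBasic δ γ τ S B) : B ⊆ Lset δ γ := by
  obtain ⟨α, -, rfl⟩ | ⟨x, -, rfl⟩ | ⟨z, hz, rfl⟩ := h
  · exact fun y hy => hy.1
  · exact fun y hy => hy.1
  · intro y hy
    rwa [Set.eq_of_mem_singleton hy]

lemma Lbelow_no_max {δ γ α : Ordinal} (hδ : δ ≠ 0) {x : List SOrd}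
    (hx : x ∈ Lbelow δ γ α) : ∃ w ∈ Lbelow δ γ α, Llt x w := by
  obtain ⟨hxL, hlt⟩ := hx
  have hne := hxL.1
  have hxl : 0 < x.length := List.length_pos_iff.mpr hne
  refine ⟨x ++ [SOrd.pos 0], ⟨Lset_append hxL (isBetween_pos0 hδ), ?_⟩, llt_concat_pos x 0⟩
  obtain ⟨k, hxk, hyk, ht, hl⟩ | ⟨hl, ht, hp⟩ | ⟨hl, ht, hp⟩ := hlt
  · have hk0 : k = 0 := by simp at hyk; omega
    subst hk0
    refine Or.inl ⟨0, by simp, by simp, rfl, ?_⟩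
    rw [concat_get _ hxl]
    exact hl
  · exfalso
    simp only [List.length_singleton] at hl
    exact hne (List.length_eq_zero_iff.mp (by omega))
  · have hl' : 1 < x.length := by simpa using hl
    refine Or.inr (Or.inr ⟨by simp only [List.length_singleton, List.length_append]; omega, ?_, ?_⟩)
    · simp only [List.length_singleton]
      rw [concat_take _ hl'.le]
      exact ht
    · simp only [List.length_singleton]
      rw [concat_get _ hl']
      exact hp

lemma Jset_no_max {δ γ τ : Ordinal} {S : Ordinal → Set Ordinal} (hδ : δ ≠ 0)
    {x₀ : List SOrd} (hrel : Relevant δ γ τ S x₀) {x : List SOrd}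
    (hx : x ∈ Jset δ γ x₀) : ∃ w ∈ Jset δ γ x₀, Llt x w := by
  obtain ⟨hxL, hge, hlt⟩ := hx
  have hx₀L : x₀ ∈ Lset δ γ := hrel.1
  obtain ⟨k, hxk, hyk, ht, hl⟩ | ⟨hl, ht, hp⟩ | ⟨hl, ht, hp⟩ := hlt
  · refine ⟨x ++ [SOrd.pos 0], ⟨Lset_append hxL (isBetween_pos0 hδ),
      Or.inr (Llt_ext hge (concat_take_self x _) (concat_len x _)
        (by rw [concat_get_last]; exact ⟨0, rfl⟩)),
      Or.inl ⟨k, by simp; omega, hyk, ?_, ?_⟩⟩, llt_concat_pos x 0⟩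
    · rw [concat_take _ hxk.le]
      exact ht
    · rw [concat_get _ hxk]
      exact hl
  · have hw : (x₀ ++ [SOrd.neg 0]).take x.length = x := by
      rw [concat_take _ hl.le]
      exact ht
    have hlen2 : x.length < (x₀ ++ [SOrd.neg 0]).length := by simp; omega
    have hp2 : SOrd.IsPos ((x₀ ++ [SOrd.neg 0])[x.length]'hlen2) := by
      rw [concat_get _ hl]
      exact hp
    exact ⟨x₀ ++ [SOrd.neg 0],
      ⟨Lset_append hx₀L (isBetween_neg0 hδ), Or.inr (Llt_ext hge hw hlen2 hp2),
        llt_concat_neg x₀ 0⟩,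
      Llt_ext (Or.inl rfl) hw hlen2 hp2⟩
  · refine ⟨x ++ [SOrd.pos 0], ⟨Lset_append hxL (isBetween_pos0 hδ),
      Or.inr (Llt_ext hge (concat_take_self x _) (concat_len x _)
        (by rw [concat_get_last]; exact ⟨0, rfl⟩)),
      Or.inr (Or.inr ⟨by simp; omega, ?_, ?_⟩)⟩, llt_concat_pos x 0⟩
    · rw [concat_take _ hl.le]
      exact ht
    · rw [concat_get _ hl]
      exact hp

end RemoveMaxAux

/-- If `A ∈ I^{Σ,γ}` is nonempty with maximum element `x`, then
`A ∩ L^{δ,γ}_x ∈ I^{Σ,γ}_x` (equivalently, `A ∖ {x} ∈ I^{Σ,γ}`). In particular,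
the only basic sets with a maximum element are the singletons. -/

theorem Ifam_remove_max (δ γ τ : Ordinal) (hδ : δ ≠ 0) (hγ : γ ≠ 0) (hτ : τ ≠ 0)
    (hδcof : Cardinal.aleph0 < δ.cof) (hτcof : Cardinal.aleph0 < τ.cof)
    (S : Ordinal → Set Ordinal) (hS : IsPartition δ τ S) :
    (∀ A ∈ Ifam δ γ τ S, ∀ x, x ∈ A → (∀ y ∈ A, y = x ∨ Llt y x) →
        A ∩ Lx δ γ x ∈ Ix δ γ τ S x ∧ A \ {x} ∈ Ifam δ γ τ S) ∧
    (∀ B, IsBasic δ γ τ S B → (∃ x ∈ B, ∀ y ∈ B, y = x ∨ Llt y x) →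
        ∃ z, B = ({z} : Set (List SOrd))) := by
  classical
  have part2 : ∀ B, IsBasic δ γ τ S B → (∃ x ∈ B, ∀ y ∈ B, y = x ∨ Llt y x) →
      ∃ z, B = ({z} : Set (List SOrd)) := by
    rintro B hB ⟨x, hxB, hmax⟩
    obtain ⟨α, hα, rfl⟩ | ⟨x₀, hrel, rfl⟩ | ⟨z, hz, rfl⟩ := hB
    · exfalso
      obtain ⟨w, hwB, hxw⟩ := RemoveMaxAux.Lbelow_no_max hδ hxB
      rcases hmax w hwB with rfl | h
      · exact RemoveMaxAux.Llt_irrefl _ hxw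
      · exact RemoveMaxAux.Llt_asymm hxw h
    · exfalso
      obtain ⟨w, hwB, hxw⟩ := RemoveMaxAux.Jset_no_max hδ hrel hxB
      rcases hmax w hwB with rfl | h
      · exact RemoveMaxAux.Llt_irrefl _ hxw
      · exact RemoveMaxAux.Llt_asymm hxw h
    · exact ⟨z, rfl⟩
  refine ⟨?_, part2⟩
  rintro A ⟨E, hE, rfl⟩ x hxA hmax
  have hsub : (⋃ B ∈ E, B) ⊆ Lset δ γ := by
    intro y hy
    simp only [Set.mem_iUnion, exists_prop] at hy
    obtain ⟨B, hB, hyB⟩ := hy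
    exact RemoveMaxAux.basic_sub (hE B hB) hyB
  have hdiff : (⋃ B ∈ E, B) \ {x} = (⋃ B ∈ E, B) ∩ Lx δ γ x := by
    ext y
    constructor
    · rintro ⟨hyA, hyx⟩
      refine ⟨hyA, hsub hyA, ?_⟩
      rcases hmax y hyA with rfl | h
      · exact absurd (Set.mem_singleton _) hyx
      · exact h
    · rintro ⟨hyA, hyL, hlt⟩
      exact ⟨hyA, fun h => RemoveMaxAux.Llt_irrefl x ((Set.eq_of_mem_singleton h) ▸ hlt)⟩
  have hfam : (⋃ B ∈ E, B) \ {x} ∈ Ifam δ γ τ S := by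
    refine ⟨E.filter (fun B => x ∉ B), fun B hB => hE B (Finset.mem_filter.mp hB).1, ?_⟩
    ext y
    simp only [Set.mem_diff, Set.mem_iUnion, Finset.mem_filter, Set.mem_singleton_iff,
      exists_prop]
    constructor
    · rintro ⟨⟨B, hB, hyB⟩, hyx⟩
      refine ⟨B, ⟨hB, ?_⟩, hyB⟩
      intro hxB
      obtain ⟨z, hz⟩ := part2 B (hE B hB)
        ⟨x, hxB, fun u hu => hmax u (Set.mem_biUnion hB hu)⟩
      rw [hz] at hxB hyB
      exact hyx ((Set.eq_of_mem_singleton hyB).trans (Set.eq_of_mem_singleton hxB).symm)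
    · rintro ⟨B, ⟨hB, hxB⟩, hyB⟩
      exact ⟨⟨B, hB, hyB⟩, fun h => hxB (h ▸ hyB)⟩
  constructor
  · refine ⟨Set.inter_subset_right, ?_⟩
    rw [← hdiff]
    exact hfam
  · exact hfam
end

section
/- Fix regular uncountable cardinals θ < μ < λ and a sequence Σ = ⟨S_β : β < θ⟩ of pairwise disjoint subsets of λ* (the negative copy of λ), each co-initial in λ*, whose union is λ*. For δ ≤ λ put L^δ := L^{δ,λ·μ} (λ·μ is ordinal multiplication), Σ_δ := ⟨S_β ∩ δ* : β < θ⟩ and I^δ := I^{Σ_δ, λ·μ} (built on L^{δ,λ·μ} from the partition Σ_δ of δ*). Then, for θ ≤ δ ≤ δ' ≤ λ, I^δ = {X ∩ L^δ : X ∈ I^{δ'}}; consequently, for every x ∈ L^δ, I^δ_x = {X ∩ L^δ : X ∈ I^{δ'}_x}. -/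
open Ordinal Cardinal

section OrderFacts

namespace SOrd

theorem neg_lt_pos (α β : Ordinal) : neg α < pos β := by
  rw [neg, pos, Sum.Lex.toLex_lt_toLex]; exact Sum.Lex.sep _ _

theorem pos_lt_pos {α β : Ordinal} : pos α < pos β ↔ α < β := by
  simp only [pos]; rw [Sum.Lex.toLex_lt_toLex, Sum.lex_inr_inr]

theorem neg_lt_neg {α β : Ordinal} : neg α < neg β ↔ β < α := by
  simp only [neg]; rw [Sum.Lex.toLex_lt_toLex, Sum.lex_inl_inl]; rfl

theorem not_pos_lt_neg (α β : Ordinal) : ¬ pos α < neg β := by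
  rw [pos, neg, Sum.Lex.toLex_lt_toLex]
  intro h; cases h

theorem isPos_pos (α : Ordinal) : IsPos (pos α) := ⟨α, rfl⟩

theorem not_isPos_neg (α : Ordinal) : ¬ IsPos (neg α) := by
  rintro ⟨β, h⟩
  rw [neg, pos] at h
  exact absurd (toLex.injective h) (by simp)

theorem val_pos (α : Ordinal) : (pos α).val = α := rfl

theorem val_neg (α : Ordinal) : (neg α).val = α := rfl

theorem pos_or_neg (a : SOrd) : a = pos a.val ∨ a = neg a.val := by
  rcases h : ofLex a with b | b
  · right
    have : a = toLex (Sum.inl b) := by rw [← h]; rfl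
    rw [this]; rfl
  · left
    have : a = toLex (Sum.inr b) := by rw [← h]; rfl
    rw [this]; rfl

end SOrd

theorem isBetween_iff {δ : Ordinal} {a : SOrd} : IsBetween δ a ↔ a.val < δ := by
  rcases SOrd.pos_or_neg a with h | h <;> rw [IsBetween] <;> nth_rewrite 1 [h] <;> nth_rewrite 2 [h]
  · simp [SOrd.neg_lt_pos, SOrd.pos_lt_pos]
  · simp [SOrd.neg_lt_pos, SOrd.neg_lt_neg]

theorem isBetween_mono {δ δ' : Ordinal} (h : δ ≤ δ') {a : SOrd} (ha : IsBetween δ a) :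
    IsBetween δ' a := isBetween_iff.2 ((isBetween_iff.1 ha).trans_le h)

end OrderFacts

section Emb

abbrev TT : Type 1 := Lex ((Fin 3) × SOrd)

noncomputable def sgn (a : SOrd) : Fin 3 := Sum.elim (fun _ => 0) (fun _ => 2) (ofLex a)

noncomputable def emb (a : SOrd) : TT := toLex (sgn a, a)

noncomputable def sent : TT := toLex (1, SOrd.pos 0)

theorem sgn_pos (α : Ordinal) : sgn (SOrd.pos α) = 2 := rfl
theorem sgn_neg (α : Ordinal) : sgn (SOrd.neg α) = 0 := rfl

theorem sgn_eq_two_iff {a : SOrd} : sgn a = 2 ↔ SOrd.IsPos a := by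
  rcases SOrd.pos_or_neg a with h | h <;> rw [h]
  · simp only [sgn_pos]
    exact ⟨fun _ => SOrd.isPos_pos _, fun _ => trivial⟩
  · simp only [sgn_neg]
    exact ⟨fun h' => absurd h' (by decide), fun h' => absurd h' (SOrd.not_isPos_neg _)⟩

theorem sgn_eq_zero_iff {a : SOrd} : sgn a = 0 ↔ ¬ SOrd.IsPos a := by
  rcases SOrd.pos_or_neg a with h | h <;> rw [h]
  · simp only [sgn_pos]
    exact ⟨fun h' => absurd h' (by decide), fun h' => absurd (SOrd.isPos_pos _) h'⟩
  · simp only [sgn_neg]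
    exact ⟨fun _ => SOrd.not_isPos_neg _, fun _ => trivial⟩

theorem emb_strictMono : StrictMono emb := by
  intro a b hab
  rw [emb, emb, Prod.Lex.lt_iff]
  rcases SOrd.pos_or_neg a with ha | ha <;> rcases SOrd.pos_or_neg b with hb | hb
  · right
    exact ⟨by rw [ha, hb, sgn_pos, sgn_pos]; rfl, hab⟩
  · exfalso; rw [ha, hb] at hab; exact SOrd.not_pos_lt_neg _ _ hab
  · left
    show sgn a < sgn b
    rw [ha, hb, sgn_neg, sgn_pos]; decide
  · right
    exact ⟨by rw [ha, hb, sgn_neg, sgn_neg]; rfl, hab⟩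

theorem emb_lt_emb {a b : SOrd} : emb a < emb b ↔ a < b := emb_strictMono.lt_iff_lt

theorem emb_inj : Function.Injective emb := emb_strictMono.injective

theorem sgn_ne_one (a : SOrd) : sgn a ≠ 1 := by
  rcases SOrd.pos_or_neg a with h | h <;> rw [h]
  · rw [sgn_pos]; decide
  · rw [sgn_neg]; decide

theorem emb_ne_sent (a : SOrd) : emb a ≠ sent := by
  intro h
  rw [emb, sent] at h
  have : sgn a = 1 := congrArg (fun p : TT => (ofLex p).1) h
  exact sgn_ne_one a this

theorem emb_lt_sent {a : SOrd} : emb a < sent ↔ ¬ SOrd.IsPos a := by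
  rw [emb, sent, Prod.Lex.lt_iff]
  constructor
  · rintro (h | ⟨h, -⟩)
    · intro hpos
      rw [← sgn_eq_two_iff] at hpos
      change sgn a < 1 at h; rw [hpos] at h
      exact absurd h (by decide)
    · exact absurd h (sgn_ne_one a)
  · intro h
    left
    show sgn a < 1
    rw [sgn_eq_zero_iff.2 h]; decide

theorem sent_lt_emb {a : SOrd} : sent < emb a ↔ SOrd.IsPos a := by
  rw [emb, sent, Prod.Lex.lt_iff]
  constructor
  · rintro (h | ⟨h, -⟩)
    · rw [← sgn_eq_two_iff]
      have h1 := sgn_ne_one a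
      have h2 : (1 : Fin 3) < sgn a := h
      omega
    · exact absurd h.symm (sgn_ne_one a)
  · intro h
    left
    show (1 : Fin 3) < sgn a
    rw [sgn_eq_two_iff.2 h]; decide

end Emb

section LexCore

noncomputable def FF (x : List SOrd) : List TT := (x.map emb) ++ [sent]

theorem FF_length (x : List SOrd) : (FF x).length = x.length + 1 := by simp [FF]

theorem FF_take {x : List SOrd} {k : ℕ} (h : k ≤ x.length) :
    (FF x).take k = (x.take k).map emb := by
  rw [FF, List.take_append, Nat.sub_eq_zero_of_le (by simpa using h),
    List.take_zero, List.append_nil, List.map_take]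

theorem FF_getElem {x : List SOrd} {k : ℕ} (h : k < x.length) :
    (FF x)[k]'(by rw [FF_length]; omega) = emb (x[k]'h) := by
  simp only [FF]
  rw [List.getElem_append_left (by simpa using h)]
  simp

theorem FF_getElem_last (x : List SOrd) :
    (FF x)[x.length]'(by rw [FF_length]; omega) = sent := by
  simp only [FF]
  rw [List.getElem_append_right (by simp)]
  simp

theorem FF_inj : Function.Injective FF := by
  intro x y h
  rw [FF, FF] at h
  have := List.append_left_injective [sent] h
  exact List.map_injective_iff.2 emb_inj this

theorem lex_intro {α : Type*} {r : α → α → Prop} (k : ℕ) :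
    ∀ (l1 l2 : List α), l1.take k = l2.take k → ∀ (h1 : k < l1.length) (h2 : k < l2.length),
      r (l1[k]'h1) (l2[k]'h2) → List.Lex r l1 l2 := by
  induction k with
  | zero =>
    intro l1 l2 ht h1 h2 hr
    match l1, l2 with
    | a :: t1, b :: t2 => exact List.Lex.rel hr
  | succ k ih =>
    intro l1 l2 ht h1 h2 hr
    match l1, l2 with
    | a :: t1, b :: t2 =>
      rw [List.take_succ_cons, List.take_succ_cons] at ht
      obtain ⟨rfl, ht'⟩ : a = b ∧ t1.take k = t2.take k := by
        constructor
        · exact (List.cons.injEq _ _ _ _ ▸ ht).1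
        · exact (List.cons.injEq _ _ _ _ ▸ ht).2
      exact List.Lex.cons (ih t1 t2 ht' (by simpa using h1) (by simpa using h2)
        (by simpa using hr))

theorem lex_elim {α : Type*} {r : α → α → Prop} {l1 l2 : List α} (h : List.Lex r l1 l2) :
    ∃ k, l1.take k = l2.take k ∧
      ((∃ h1 : k < l1.length, ∃ h2 : k < l2.length, r (l1[k]'h1) (l2[k]'h2)) ∨
       (k = l1.length ∧ k < l2.length)) := by
  induction h with
  | nil => exact ⟨0, rfl, Or.inr ⟨rfl, by simp⟩⟩
  | @rel a l1 b l2 hr => exact ⟨0, rfl, Or.inl ⟨by simp, by simp, hr⟩⟩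
  | @cons a l1 l2 h ih =>
    obtain ⟨k, ht, hc⟩ := ih
    refine ⟨k + 1, by simp [ht], ?_⟩
    rcases hc with ⟨h1, h2, hr⟩ | ⟨he, hl⟩
    · exact Or.inl ⟨by simpa using Nat.succ_lt_succ h1, by simpa using Nat.succ_lt_succ h2,
        by simpa using hr⟩
    · exact Or.inr ⟨by simp [he], by simpa using Nat.succ_lt_succ hl⟩

theorem getElem_eq_of_take_eq {α : Type*} {l1 l2 : List α} {m k : ℕ}
    (h : l1.take m = l2.take m) (hk : k < m) (h1 : k < l1.length) (h2 : k < l2.length) :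
    l1[k]'h1 = l2[k]'h2 := by
  have e1 : (l1.take m)[k]'(by rw [List.length_take]; omega) = l1[k]'h1 := List.getElem_take
  have e2 : (l2.take m)[k]'(by rw [List.length_take]; omega) = l2[k]'h2 := List.getElem_take
  rw [← e1, ← e2]
  exact List.getElem_of_eq h _

theorem llt_iff {x y : List SOrd} : Llt x y ↔ List.Lex (· < ·) (FF x) (FF y) := by
  constructor
  · rintro (⟨k, hx, hy, ht, hlt⟩ | ⟨hy, ht, hpos⟩ | ⟨hx, ht, hneg⟩)
    · refine lex_intro k _ _ ?_ (by rw [FF_length]; omega) (by rw [FF_length]; omega) ?_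
      · rw [FF_take (le_of_lt hx), FF_take (le_of_lt hy), ht]
      · rw [FF_getElem hx, FF_getElem hy]
        exact emb_lt_emb.2 hlt
    · refine lex_intro x.length _ _ ?_ (by rw [FF_length]; omega) (by rw [FF_length]; omega) ?_
      · rw [FF_take (le_refl _), FF_take (le_of_lt hy), ht, List.take_length]
      · rw [FF_getElem_last, FF_getElem hy]
        exact sent_lt_emb.2 hpos
    · refine lex_intro y.length _ _ ?_ (by rw [FF_length]; omega) (by rw [FF_length]; omega) ?_
      · rw [FF_take (le_of_lt hx), FF_take (le_refl _), ht, List.take_length]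
      · rw [FF_getElem hx, FF_getElem_last]
        exact emb_lt_sent.2 hneg
  · intro h
    obtain ⟨k, ht, hc⟩ := lex_elim h
    rcases hc with ⟨h1, h2, hr⟩ | ⟨he, hl⟩
    · have h1n : k < x.length + 1 := by have := h1; rwa [FF_length] at this
      have h2n : k < y.length + 1 := by have := h2; rwa [FF_length] at this
      rcases Nat.lt_or_ge k x.length with hkx | hkx <;> rcases Nat.lt_or_ge k y.length with hky | hky
      · -- both interior
        left
        refine ⟨k, hkx, hky, ?_, ?_⟩
        · have := ht
          rw [FF_take (le_of_lt hkx), FF_take (le_of_lt hky)] at this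
          exact List.map_injective_iff.2 emb_inj this
        · rw [FF_getElem hkx, FF_getElem hky] at hr
          exact emb_lt_emb.1 hr
      · -- k = y.length, k < x.length : negative extension
        have hk : k = y.length := by omega
        subst hk
        right; right
        refine ⟨hkx, ?_, ?_⟩
        · have := ht
          rw [FF_take (le_of_lt hkx), FF_take (le_refl _), List.take_length] at this
          exact List.map_injective_iff.2 emb_inj this
        · rw [FF_getElem hkx, FF_getElem_last] at hr
          exact emb_lt_sent.1 hr
      · -- k = x.length, k < y.length : positive extension
        have hk : k = x.length := by omega
        subst hk
        right; left
        refine ⟨hky, ?_, ?_⟩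
        · have := ht
          rw [FF_take (le_refl _), FF_take (le_of_lt hky), List.take_length] at this
          exact (List.map_injective_iff.2 emb_inj this).symm
        · rw [FF_getElem_last, FF_getElem hky] at hr
          exact sent_lt_emb.1 hr
      · -- k = x.length = y.length : sent < sent
        exfalso
        have hk1 : k = x.length := by omega
        have hk2 : k = y.length := by omega
        have hx' : (FF x)[k]'h1 = sent := by
          simp only [hk1]; exact FF_getElem_last x
        have hy' : (FF y)[k]'h2 = sent := by
          simp only [hk2]; exact FF_getElem_last y
        rw [hx', hy'] at hr
        exact lt_irrefl _ hr
    · -- prefix case: impossible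
      exfalso
      rw [FF_length] at he hl
      have hxy : x.length < y.length := by omega
      have : (FF y)[x.length]'(by rw [FF_length]; omega) = (FF x)[x.length]'(by rw [FF_length]; omega) :=
        (getElem_eq_of_take_eq ht (by omega) (by rw [FF_length]; omega) (by rw [FF_length]; omega)).symm
      rw [FF_getElem_last, FF_getElem hxy] at this
      exact emb_ne_sent _ this

theorem llt_irrefl (x : List SOrd) : ¬ Llt x x := by
  intro h
  rw [llt_iff] at h
  exact asymm h h

theorem llt_trans {x y z : List SOrd} (h1 : Llt x y) (h2 : Llt y z) : Llt x z := by
  rw [llt_iff] at *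
  exact List.lex_trans lt_trans h1 h2

theorem llt_asymm {x y : List SOrd} (h1 : Llt x y) (h2 : Llt y x) : False := by
  rw [llt_iff] at *
  exact asymm h1 h2

theorem llt_trichotomy (x y : List SOrd) : Llt x y ∨ x = y ∨ Llt y x := by
  rcases trichotomous_of (List.Lex ((· < ·) : TT → TT → Prop)) (FF x) (FF y) with h | h | h
  · exact Or.inl (llt_iff.2 h)
  · exact Or.inr (Or.inl (FF_inj h))
  · exact Or.inr (Or.inr (llt_iff.2 h))

end LexCore

section Restrict

variable {δ δ' γ τ : Ordinal}

theorem Lset_mono (h : δ ≤ δ') : Lset δ γ ⊆ Lset δ' γ := by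
  rintro x ⟨hne, hhead, hbet⟩
  exact ⟨hne, hhead, fun k hk h0 => isBetween_mono h (hbet k hk h0)⟩

theorem val_lt_of_mem_Lset {x : List SOrd} (hx : x ∈ Lset δ γ) {i : ℕ}
    (hi : i < x.length) (h0 : 0 < i) : (x[i]'hi).val < δ :=
  isBetween_iff.1 (hx.2.2 i hi h0)

theorem take_mem_Lset {x : List SOrd} (hx : x ∈ Lset δ γ) {m : ℕ} (h0 : 0 < m)
    (hm : m ≤ x.length) : x.take m ∈ Lset δ γ := by
  obtain ⟨hne, ⟨h00, α, hα, hhead⟩, hbet⟩ := hx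
  have hlen : (x.take m).length = m := by rw [List.length_take]; omega
  refine ⟨?_, ⟨by omega, α, hα, ?_⟩, ?_⟩
  · intro h
    rw [h] at hlen
    simp at hlen; omega
  · rw [List.getElem_take]; exact hhead
  · intro k hk hk0
    rw [List.getElem_take]
    exact hbet k (by rw [hlen] at hk; omega) hk0

theorem colorOf_inter {S : Ordinal → Set Ordinal} (h : δ ≤ δ') {ξ : Ordinal} (hξ : ξ < δ) :
    colorOf (fun β => S β ∩ Set.Iio δ) ξ = colorOf (fun β => S β ∩ Set.Iio δ') ξ := by
  unfold colorOf
  congr 1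
  ext β
  simp only [Set.mem_setOf_eq, Set.mem_inter_iff, Set.mem_Iio]
  exact ⟨fun ⟨h1, _⟩ => ⟨h1, hξ.trans_le h⟩, fun ⟨h1, _⟩ => ⟨h1, hξ⟩⟩

theorem relevant_congr {S : Ordinal → Set Ordinal} (h : δ ≤ δ') {x : List SOrd}
    (hx : x ∈ Lset δ γ) :
    Relevant δ γ τ (fun β => S β ∩ Set.Iio δ) x ↔
      Relevant δ' γ τ (fun β => S β ∩ Set.Iio δ') x := by
  have key : ∀ j ∈ rIdx τ x, ∀ hj : j - 1 < x.length,
      colorOf (fun β => S β ∩ Set.Iio δ) (x[j-1]'hj).val =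
      colorOf (fun β => S β ∩ Set.Iio δ') (x[j-1]'hj).val := by
    rintro j ⟨hjl, hj2, -, -⟩ hj
    exact colorOf_inter h (val_lt_of_mem_Lset hx hj (by omega))
  constructor
  · rintro ⟨hL, h3, hodd, hsign, hcol, hlast⟩
    refine ⟨Lset_mono h hx, h3, hodd, hsign, ?_, hlast⟩
    intro i hi j hj hij h1' h2'
    have := hcol i hi j hj hij h1' h2'
    rwa [key i hi h1', key j hj h2'] at this
  · rintro ⟨hL, h3, hodd, hsign, hcol, hlast⟩
    refine ⟨hx, h3, hodd, hsign, ?_, hlast⟩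
    intro i hi j hj hij h1' h2'
    have := hcol i hi j hj hij h1' h2'
    rwa [← key i hi h1', ← key j hj h2'] at this

theorem Lbelow_inter (h : δ ≤ δ') (α : Ordinal) :
    Lbelow δ γ α = Lbelow δ' γ α ∩ Lset δ γ := by
  ext z
  simp only [Lbelow, Set.mem_setOf_eq, Set.mem_inter_iff, Set.sep_setOf]
  exact ⟨fun ⟨h1, h2⟩ => ⟨⟨Lset_mono h h1, h2⟩, h1⟩, fun ⟨⟨_, h2⟩, h1⟩ => ⟨h1, h2⟩⟩

theorem Jset_inter (h : δ ≤ δ') (x : List SOrd) :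
    Jset δ γ x = Jset δ' γ x ∩ Lset δ γ := by
  ext z
  simp only [Jset, Set.mem_setOf_eq, Set.mem_inter_iff, Set.sep_setOf]
  exact ⟨fun ⟨h1, h2⟩ => ⟨⟨Lset_mono h h1, h2⟩, h1⟩, fun ⟨⟨_, h2⟩, h1⟩ => ⟨h1, h2⟩⟩

end Restrict

section Empty

variable {δ δ' γ τ : Ordinal}

theorem getElem_take_eq {α : Type*} {l : List α} {m k : ℕ} (hk : k < m) (h : k < l.length) :
    (l.take m)[k]'(by rw [List.length_take]; omega) = l[k]'h := List.getElem_take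

theorem Jset_inter_empty {S' : Ordinal → Set Ordinal} (hτ : τ ≤ δ) (h : δ ≤ δ')
    {x : List SOrd} (hrel : Relevant δ' γ τ S' x) (hx : x ∉ Lset δ γ) :
    Jset δ' γ x ∩ Lset δ γ = ∅ := by
  obtain ⟨hL', h3, hodd, hsign, -, hlast⟩ := hrel
  have hbad : ∃ k0, ∃ hk : k0 < x.length, 0 < k0 ∧ δ ≤ (x[k0]'hk).val := by
    by_contra hcon
    push_neg at hcon
    exact hx ⟨hL'.1, hL'.2.1, fun k hk h0 => isBetween_iff.2 (hcon k hk h0)⟩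
  obtain ⟨k0, hk0, hk00, hk0δ⟩ := hbad
  obtain ⟨hl1, hl2, hl3, hl4⟩ := hlast
  have hlastpos : SOrd.IsPos (x[x.length - 1]'hl1) := (hsign (x.length - 1) hl1).2 hl3
  obtain ⟨β, hβ⟩ := hlastpos
  have hβτ : β < τ := SOrd.pos_lt_pos.1 (hβ ▸ hl4)
  have hlastval : (x[x.length - 1]'hl1).val < δ := by
    rw [hβ, SOrd.val_pos]; exact hβτ.trans_le hτ
  have hk0ne : k0 ≠ x.length - 1 := by
    intro hh
    have : δ ≤ (x[x.length - 1]'hl1).val := by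
      have := hk0δ; simp only [hh] at this; exact this
    exact absurd hlastval (not_lt.2 this)
  have hk0lt : k0 < x.length - 1 := by omega
  have hul : (x.take (x.length - 1)).length = x.length - 1 := by
    rw [List.length_take]; omega
  ext z
  simp only [Set.mem_inter_iff, Set.mem_empty_iff_false, iff_false]
  rintro ⟨⟨hzL', hge, hltzx⟩, hzL⟩
  have contra_of_eq : ∀ hkz : k0 < z.length, z[k0]'hkz = x[k0]'hk0 → False := by
    intro hkz he
    have := val_lt_of_mem_Lset hzL hkz hk00
    rw [he] at this
    exact absurd this (not_lt.2 hk0δ)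
  rcases hge with rfl | hlt2
  · exact contra_of_eq (by rw [hul]; omega) (getElem_take_eq hk0lt hk0)
  rcases hlt2 with ⟨m, hmu, hmz, htake, hltm⟩ | ⟨hlen, htk, hpos⟩ | ⟨hlen, htk, hneg⟩
  · -- (A) first difference at m inside u
    have hml : m < x.length - 1 := by rw [hul] at hmu; exact hmu
    have hum : (x.take (x.length - 1))[m]'hmu = x[m]'(by omega) := getElem_take_eq hml (by omega)
    rcases hltzx with ⟨k, hkz, hkx, htk2, hlt3⟩ | ⟨hlen2, htk2, hpos2⟩ | ⟨hlen2, htk2, hneg2⟩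
    · rcases lt_trichotomy k m with hkm | hkm | hmk
      · -- k < m : z[k] = u[k] = x[k], contradicting z[k] < x[k]
        have e1 : (x.take (x.length - 1))[k]'(by omega) = z[k]'hkz :=
          getElem_eq_of_take_eq htake hkm (by omega) (by omega)
        have e2 : (x.take (x.length - 1))[k]'(by omega) = x[k]'hkx :=
          getElem_take_eq (by omega) hkx
        rw [← e1, e2] at hlt3
        exact lt_irrefl _ hlt3
      · -- k = m
        subst hkm
        have : z[k]'hkz < (x.take (x.length - 1))[k]'hmu := by
          rw [hum]; exact hlt3
        exact absurd hltm (lt_asymm this)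
      · -- m < k : z[m] = x[m] = u[m], contradicting u[m] < z[m]
        have e1 : z[m]'hmz = x[m]'(by omega) :=
          getElem_eq_of_take_eq htk2 hmk hmz (by omega)
        have : (x.take (x.length - 1))[m]'hmu < x[m]'(by omega) := by
          rw [← e1]; exact hltm
        rw [hum] at this
        exact lt_irrefl _ this
    · -- (ii) x end-extends z : z[m] = x[m] = u[m], contradiction
      have e1 : z[m]'hmz = x[m]'(by omega) := by
        have h' : x.take z.length = z.take z.length := by rw [htk2, List.take_length]
        exact (getElem_eq_of_take_eq h' hmz (by omega) hmz).symm
      have : (x.take (x.length - 1))[m]'hmu < x[m]'(by omega) := by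
        rw [← e1]; exact hltm
      rw [hum] at this
      exact lt_irrefl _ this
    · -- (iii) z end-extends x : z[k0] = x[k0]
      have h' : z.take x.length = x.take x.length := by rw [htk2, List.take_length]
      exact contra_of_eq (by omega) (getElem_eq_of_take_eq h' hk0 (by omega) hk0)
  · -- (B) z properly end-extends u : z[k0] = u[k0] = x[k0]
    rw [hul] at hlen htk
    have h' : z.take (x.length - 1) = x.take (x.length - 1) := htk
    exact contra_of_eq (by omega) (getElem_eq_of_take_eq h' hk0lt (by omega) hk0)
  · -- (C) u properly end-extends z
    rw [hul] at hlen
    have humx : (x.take (x.length - 1))[z.length]'(by omega) = x[z.length]'(by omega) :=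
      getElem_take_eq hlen (by omega)
    rcases hltzx with ⟨k, hkz, hkx, htk2, hlt3⟩ | ⟨hlen2, htk2, hpos2⟩ | ⟨hlen2, htk2, hneg2⟩
    · -- z[k] = u[k] = x[k], contradicting z[k] < x[k]
      have h' : (x.take (x.length - 1)).take z.length = z.take z.length := by
        rw [htk, List.take_length]
      have e1 : (x.take (x.length - 1))[k]'(by omega) = z[k]'hkz :=
        getElem_eq_of_take_eq h' hkz (by omega) hkz
      have e2 : (x.take (x.length - 1))[k]'(by omega) = x[k]'hkx :=
        getElem_take_eq (by omega) hkx
      rw [← e1, e2] at hlt3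
      exact lt_irrefl _ hlt3
    · -- IsPos x[z.length] vs ¬IsPos u[z.length]
      apply hneg
      have : (x.take (x.length - 1))[z.length]'(by omega) = x[z.length]'hlen2 := humx
      rw [this]
      exact hpos2
    · -- x.length < z.length < x.length - 1 : absurd
      omega
end Empty

section IfamClosure

variable {δ γ τ : Ordinal} {S : Ordinal → Set Ordinal}

theorem empty_mem_Ifam : (∅ : Set (List SOrd)) ∈ Ifam δ γ τ S :=
  ⟨∅, by simp, by simp⟩

theorem basic_mem_Ifam {B : Set (List SOrd)} (h : IsBasic δ γ τ S B) : B ∈ Ifam δ γ τ S :=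
  ⟨{B}, by simpa, by simp⟩

theorem union_mem_Ifam {A A' : Set (List SOrd)} (h : A ∈ Ifam δ γ τ S)
    (h' : A' ∈ Ifam δ γ τ S) : A ∪ A' ∈ Ifam δ γ τ S := by
  classical
  obtain ⟨E, hE, rfl⟩ := h
  obtain ⟨E', hE', rfl⟩ := h'
  refine ⟨E ∪ E', ?_, ?_⟩
  · intro B hB
    rcases Finset.mem_union.1 hB with hB | hB
    · exact hE B hB
    · exact hE' B hB
  · rw [Finset.set_biUnion_union]

theorem Ifam_induction {P : Set (List SOrd) → Prop} (h0 : P ∅)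
    (hb : ∀ B, IsBasic δ γ τ S B → P B)
    (hu : ∀ A B, P A → P B → P (A ∪ B)) :
    ∀ A ∈ Ifam δ γ τ S, P A := by
  classical
  rintro A ⟨E, hE, rfl⟩
  induction E using Finset.induction_on with
  | empty => simpa
  | @insert B E hB ih =>
    rw [Finset.set_biUnion_insert]
    exact hu _ _ (hb _ (hE _ (Finset.mem_insert_self _ _)))
      (ih fun C hC => hE C (Finset.mem_insert_of_mem hC))

end IfamClosure

theorem take_mem_Jset {δ γ τ : Ordinal} {S : Ordinal → Set Ordinal} {x : List SOrd}
    (hrel : Relevant δ γ τ S x) : x.take (x.length - 1) ∈ Jset δ γ x := by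
  obtain ⟨hL, h3, hodd, hsign, -, -⟩ := hrel
  have hul : (x.take (x.length - 1)).length = x.length - 1 := by rw [List.length_take]; omega
  refine ⟨take_mem_Lset hL (by omega) (by omega), Or.inl rfl, ?_⟩
  right; left
  refine ⟨by rw [hul]; omega, by rw [hul], ?_⟩
  have hpos : SOrd.IsPos (x[x.length - 1]'(by omega)) := (hsign _ (by omega)).2 (by omega)
  simp only [hul]
  exact hpos

/-- Fix regular uncountable cardinals `θ < μ < λ` and a sequence
`Σ = ⟨S_β : β < θ⟩` of pairwise disjoint subsets of `λ*`, each co-initial in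
`λ*`, whose union is `λ*`. For `δ ≤ λ`, `L^δ := L^{δ,λ·μ}`,
`Σ_δ := ⟨S_β ∩ δ* : β < θ⟩` and `I^δ := I^{Σ_δ,λ·μ}`. Then for
`θ ≤ δ ≤ δ' ≤ λ`, `I^δ = {X ∩ L^δ : X ∈ I^{δ'}}`, and consequently
`I^δ_x = {X ∩ L^δ : X ∈ I^{δ'}_x}` for every `x ∈ L^δ`. -/
theorem Ifam_restriction (θ μc lamC : Cardinal.{0})
    (hθ : Cardinal.aleph0 < θ) (hθr : θ.IsRegular)
    (hμ : Cardinal.aleph0 < μc) (hμr : μc.IsRegular)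
    (hlam : Cardinal.aleph0 < lamC) (hlamr : lamC.IsRegular)
    (hθμ : θ < μc) (hmulam : μc < lamC)
    (S : Ordinal → Set Ordinal)
    (hsub : ∀ β, S β ⊆ Set.Iio lamC.ord)
    (hempty : ∀ β, θ.ord ≤ β → S β = ∅)
    (hdisj : ∀ β β', β ≠ β' → Disjoint (S β) (S β'))
    (hcoinit : ∀ β < θ.ord, ∀ η < lamC.ord, ∃ ξ ∈ S β, η ≤ ξ)
    (hcover : ∀ ξ < lamC.ord, ∃ β, ξ ∈ S β)
    (δ δ' : Ordinal) (h1 : θ.ord ≤ δ) (h2 : δ ≤ δ') (h3 : δ' ≤ lamC.ord) :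
    Ifam δ (lamC.ord * μc.ord) θ.ord (fun β => S β ∩ Set.Iio δ) =
      {Y | ∃ X ∈ Ifam δ' (lamC.ord * μc.ord) θ.ord (fun β => S β ∩ Set.Iio δ'),
        Y = X ∩ Lset δ (lamC.ord * μc.ord)} ∧
    ∀ x ∈ Lset δ (lamC.ord * μc.ord),
      Ix δ (lamC.ord * μc.ord) θ.ord (fun β => S β ∩ Set.Iio δ) x =
        {Y | ∃ X ∈ Ix δ' (lamC.ord * μc.ord) θ.ord (fun β => S β ∩ Set.Iio δ') x,
          Y = X ∩ Lset δ (lamC.ord * μc.ord)} := by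
  set γ := lamC.ord * μc.ord with hγdef
  set τ := θ.ord with hτdef
  have part1b : ∀ X ∈ Ifam δ' γ τ (fun β => S β ∩ Set.Iio δ'),
      X ∩ Lset δ γ ∈ Ifam δ γ τ (fun β => S β ∩ Set.Iio δ) := by
    apply Ifam_induction
    · rw [Set.empty_inter]; exact empty_mem_Ifam
    · intro B hB
      rcases hB with ⟨α, hα, rfl⟩ | ⟨x', hrel, rfl⟩ | ⟨z, hz, rfl⟩
      · rw [← Lbelow_inter h2]
        exact basic_mem_Ifam (Or.inl ⟨α, hα, rfl⟩)
      · by_cases hxL : x' ∈ Lset δ γ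
        · rw [← Jset_inter h2]
          exact basic_mem_Ifam (Or.inr (Or.inl ⟨x', (relevant_congr h2 hxL).2 hrel, rfl⟩))
        · rw [Jset_inter_empty h1 h2 hrel hxL]
          exact empty_mem_Ifam
      · by_cases hzL : z ∈ Lset δ γ
        · rw [Set.inter_eq_self_of_subset_left (Set.singleton_subset_iff.2 hzL)]
          exact basic_mem_Ifam (Or.inr (Or.inr ⟨z, hzL, rfl⟩))
        · rw [Set.singleton_inter_eq_empty.2 hzL]
          exact empty_mem_Ifam
    · intro A B hA hB
      rw [Set.union_inter_distrib_right]
      exact union_mem_Ifam hA hB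
  have part1a : ∀ A ∈ Ifam δ γ τ (fun β => S β ∩ Set.Iio δ),
      ∃ X ∈ Ifam δ' γ τ (fun β => S β ∩ Set.Iio δ'), A = X ∩ Lset δ γ := by
    apply Ifam_induction
    · exact ⟨∅, empty_mem_Ifam, by simp⟩
    · intro B hB
      rcases hB with ⟨α, hα, rfl⟩ | ⟨x', hrel, rfl⟩ | ⟨z, hz, rfl⟩
      · exact ⟨Lbelow δ' γ α, basic_mem_Ifam (Or.inl ⟨α, hα, rfl⟩), Lbelow_inter h2 α⟩
      · exact ⟨Jset δ' γ x', basic_mem_Ifam (Or.inr (Or.inl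
          ⟨x', (relevant_congr h2 hrel.1).1 hrel, rfl⟩)), Jset_inter h2 x'⟩
      · exact ⟨{z}, basic_mem_Ifam (Or.inr (Or.inr ⟨z, Lset_mono h2 hz, rfl⟩)),
          (Set.inter_eq_self_of_subset_left (Set.singleton_subset_iff.2 hz)).symm⟩
    · rintro A B ⟨X, hX, rfl⟩ ⟨X', hX', rfl⟩
      exact ⟨X ∪ X', union_mem_Ifam hX hX', (Set.union_inter_distrib_right _ _ _).symm⟩
  constructor
  · ext A
    constructor
    · intro hA
      exact part1a A hA
    · rintro ⟨X, hX, rfl⟩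
      exact part1b X hX
  · intro x hx
    ext A
    constructor
    · rintro ⟨hAsub, hAfam⟩
      have main : ∀ A ∈ Ifam δ γ τ (fun β => S β ∩ Set.Iio δ), A ⊆ Lx δ γ x →
          ∃ X, (X ⊆ Lx δ' γ x ∧ X ∈ Ifam δ' γ τ (fun β => S β ∩ Set.Iio δ')) ∧
            A = X ∩ Lset δ γ := by
        apply Ifam_induction
        · intro _
          exact ⟨∅, ⟨Set.empty_subset _, empty_mem_Ifam⟩, by simp⟩
        · intro B hB hBsub
          rcases hB with ⟨α, hα, rfl⟩ | ⟨x', hrel, rfl⟩ | ⟨z, hz, rfl⟩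
          · refine ⟨Lbelow δ' γ α, ⟨?_, basic_mem_Ifam (Or.inl ⟨α, hα, rfl⟩)⟩,
              Lbelow_inter h2 α⟩
            rintro z ⟨hzL', hzlt⟩
            refine ⟨hzL', ?_⟩
            rcases llt_trichotomy [SOrd.pos α] x with hax | hax | hax
            · exact llt_trans hzlt hax
            · rw [← hax]; exact hzlt
            · exact absurd (hBsub ⟨hx, hax⟩).2 (llt_irrefl x)
          · refine ⟨Jset δ' γ x', ⟨?_, basic_mem_Ifam (Or.inr (Or.inl
              ⟨x', (relevant_congr h2 hrel.1).1 hrel, rfl⟩))⟩, Jset_inter h2 x'⟩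
            rintro z ⟨hzL', hge, hzlt⟩
            refine ⟨hzL', ?_⟩
            rcases llt_trichotomy x' x with hax | hax | hax
            · exact llt_trans hzlt hax
            · rw [← hax]; exact hzlt
            · exfalso
              have hu' := take_mem_Jset hrel
              have h1' : Llt (x'.take (x'.length - 1)) x := (hBsub hu').2
              exact llt_irrefl x (hBsub ⟨hx, Or.inr h1', hax⟩).2
          · have hzlt : Llt z x := (hBsub (Set.mem_singleton z)).2
            refine ⟨{z}, ⟨Set.singleton_subset_iff.2 ⟨Lset_mono h2 hz, hzlt⟩,
              basic_mem_Ifam (Or.inr (Or.inr ⟨z, Lset_mono h2 hz, rfl⟩))⟩,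
              (Set.inter_eq_self_of_subset_left (Set.singleton_subset_iff.2 hz)).symm⟩
        · rintro A B ihA ihB hsub
          obtain ⟨X, ⟨hX1, hX2⟩, rfl⟩ := ihA ((Set.subset_union_left).trans hsub)
          obtain ⟨X', ⟨hX1', hX2'⟩, rfl⟩ := ihB ((Set.subset_union_right).trans hsub)
          exact ⟨X ∪ X', ⟨Set.union_subset hX1 hX1', union_mem_Ifam hX2 hX2'⟩,
            (Set.union_inter_distrib_right _ _ _).symm⟩
      obtain ⟨X, ⟨hX1, hX2⟩, rfl⟩ := main A hAfam hAsub
      exact ⟨X, ⟨hX1, hX2⟩, rfl⟩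
    · rintro ⟨X, ⟨hXsub, hXfam⟩, rfl⟩
      refine ⟨?_, part1b X hXfam⟩
      rintro z ⟨hzX, hzL⟩
      exact ⟨hzL, (hXsub hzX).2⟩
end

section
/- Let θ be an infinite cardinal with θ^{<θ} = θ and let κ be a cardinal with κ < θ. Then for every coloring F : [θ⁺]² → κ of the two-element subsets of θ⁺ there exists a set H ⊆ θ⁺ of cardinality θ that is homogeneous for F, i.e., F is constant on [H]². -/
open Cardinal Set

universe u

namespace ErdosRadoAux

variable {α K : Type u}

open scoped Classical

/-- The ramification branch: for a fixed `x`, `br F x η` is the least element (in a fixed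
well-order) of the set of `y` that agree with `x` (colorwise) against all previous branch
elements. -/
noncomputable def br (F : Sym2 α → K) [Nonempty α] (x : α) : Ordinal.{u} → α :=
  Ordinal.lt_wf.fix fun η ih =>
    if hS : {y : α | ∀ ρ (h : ρ < η), y ≠ ih ρ h ∧ F s(ih ρ h, y) = F s(ih ρ h, x)}.Nonempty
    then (IsWellFounded.wf (r := WellOrderingRel (α := α))).min _ hS
    else Classical.arbitrary α

/-- The candidate set at stage `η`. -/
def S (F : Sym2 α → K) [Nonempty α] (x : α) (η : Ordinal.{u}) : Set α :=
  {y | ∀ ρ < η, y ≠ br F x ρ ∧ F s(br F x ρ, y) = F s(br F x ρ, x)}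

theorem br_def (F : Sym2 α → K) [Nonempty α] (x : α) (η : Ordinal.{u}) :
    br F x η = if hS : (S F x η).Nonempty
      then (IsWellFounded.wf (r := WellOrderingRel (α := α))).min _ hS
      else Classical.arbitrary α := by
  unfold br
  rw [WellFounded.fix_eq]
  rfl

theorem S_anti (F : Sym2 α → K) [Nonempty α] (x : α) {η η' : Ordinal.{u}} (h : η ≤ η') :
    S F x η' ⊆ S F x η := fun _ hy ρ hρ => hy ρ (hρ.trans_le h)

theorem br_mem (F : Sym2 α → K) [Nonempty α] (x : α) {η : Ordinal.{u}}
    (hS : (S F x η).Nonempty) : br F x η ∈ S F x η := by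
  rw [br_def, dif_pos hS]
  exact WellFounded.min_mem _ _ hS

theorem br_congr (F : Sym2 α → K) [Nonempty α] (x x' : α) :
    ∀ η : Ordinal.{u}, (∀ ρ < η, F s(br F x ρ, x) = F s(br F x' ρ, x')) →
      br F x η = br F x' η := by
  intro η
  induction η using Ordinal.induction with
  | h η IH =>
    intro h
    have hb : ∀ ρ < η, br F x ρ = br F x' ρ := fun ρ hρ =>
      IH ρ hρ fun σ hσ => h σ (hσ.trans hρ)
    have hSS : S F x η = S F x' η := by
      ext y
      show (∀ ρ < η, _) ↔ (∀ ρ < η, _)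
      refine forall_congr' fun ρ => forall_congr' fun hρ => ?_
      rw [h ρ hρ, hb ρ hρ]
    rw [br_def, br_def, hSS]

/-- If `x` is no longer alive at stage `o`, it was "caught" at some earlier stage. -/
theorem exists_caught (F : Sym2 α → K) [Nonempty α] (x : α) (o : Ordinal.{u})
    (hx : x ∉ S F x o) : ∃ η, η < o ∧ x ∈ S F x η ∧ br F x η = x := by
  have h1 : ∃ ρ, ρ < o ∧ br F x ρ = x := by
    by_contra hc
    push_neg at hc
    exact hx fun ρ hρ => ⟨fun he => hc ρ hρ he.symm, rfl⟩
  obtain ⟨ρ₀, hρ₀, hbr₀⟩ := h1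
  set T : Set Ordinal.{u} := {ρ | br F x ρ = x} with hT
  have hTne : T.Nonempty := ⟨ρ₀, hbr₀⟩
  set η := Ordinal.lt_wf.min T hTne with hη
  have hηT : η ∈ T := Ordinal.lt_wf.min_mem T hTne
  have hηle : η ≤ ρ₀ := by
    by_contra hlt
    exact Ordinal.lt_wf.not_lt_min T hbr₀ (not_le.mp hlt)
  refine ⟨η, lt_of_le_of_lt hηle hρ₀, ?_, hηT⟩
  intro σ hσ
  refine ⟨fun he => ?_, rfl⟩
  exact Ordinal.lt_wf.not_lt_min T he.symm hσ

end ErdosRadoAux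

open ErdosRadoAux

/-- If `θ` is an infinite cardinal with `θ^{<θ} = θ` and `κ < θ`, then every
coloring `F : [θ⁺]² → κ` of the two-element subsets of `θ⁺` has a homogeneous
set of cardinality `θ`. -/
theorem exists_homogeneous_of_powerlt_eq {α K : Type u} (θ κ : Cardinal.{u})
    (hθ : Cardinal.aleph0 ≤ θ) (hpow : θ ^< θ = θ) (hκ : κ < θ)
    (hα : Cardinal.mk α = Order.succ θ) (hK : Cardinal.mk K = κ)
    (F : Sym2 α → K) :
    ∃ H : Set α, Cardinal.mk H = θ ∧
      ∃ c : K, ∀ a ∈ H, ∀ b ∈ H, a ≠ b → F s(a, b) = c := by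
  haveI hne : Nonempty α := mk_ne_zero_iff.mp (by
    rw [hα]; exact ((θ.zero_le).trans_lt (Order.lt_succ θ)).ne')
  set o := θ.ord with ho
  -- θ is regular
  have hreg : θ.IsRegular := by
    refine ⟨hθ, ?_⟩
    by_contra hcof
    push_neg at hcof
    have h1 := Cardinal.lt_power_cof hθ
    have h2 : θ ^ θ.ord.cof ≤ θ ^< θ := Cardinal.le_powerlt θ hcof
    rw [hpow] at h2
    exact absurd (h1.trans_le h2) (lt_irrefl θ)
  -- there is an `x` alive at stage `o`
  have hex : ∃ x : α, x ∈ S F x o := by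
    by_contra hall
    push_neg at hall
    have hc : ∀ x : α, ∃ η, η < o ∧ x ∈ S F x η ∧ br F x η = x := fun x =>
      exists_caught F x o (hall x)
    choose η hηo hmemS hbr using hc
    set Φ : α → Σ e : ↥(Set.Iio o), (↥(Set.Iio e.1) → ULift.{u+1} K) :=
      fun x => ⟨⟨η x, hηo x⟩, fun ρ => ⟨F s(br F x ρ.1, x)⟩⟩ with hΦ
    have hinj : Function.Injective Φ := by
      intro a b hab
      have hη : η a = η b := congrArg (fun z => z.1.1) hab
      have hcol : ∀ ρ < η a, F s(br F a ρ, a) = F s(br F b ρ, b) := by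
        intro ρ hρ
        have hρ' : ρ < η b := hη ▸ hρ
        have := congrArg (fun z : Σ e : ↥(Set.Iio o), (↥(Set.Iio e.1) → ULift.{u+1} K) =>
          if h : ρ < z.1.1 then some (z.2 ⟨ρ, h⟩).down else none) hab
        simp only [hΦ] at this
        rw [dif_pos hρ, dif_pos hρ'] at this
        exact Option.some.inj this
      have hcongr := br_congr F a b (η a) hcol
      have hb2 : br F b (η a) = b := by rw [hη]; exact hbr b
      exact ((hbr a).symm.trans hcongr).trans hb2
    have hcard : lift.{u + 1} (#α) ≤ #(Σ e : ↥(Set.Iio o), (↥(Set.Iio e.1) → ULift.{u+1} K)) := by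
      have := Cardinal.lift_mk_le'.mpr ⟨⟨Φ, hinj⟩⟩
      exact le_of_le_of_eq this (Cardinal.lift_id'.{u, u+1} _)
    have hsum : #(Σ e : ↥(Set.Iio o), (↥(Set.Iio e.1) → ULift.{u+1} K)) ≤ lift.{u+1} θ := by
      rw [Cardinal.mk_sigma]
      calc (Cardinal.sum fun e : ↥(Set.Iio o) => #(↥(Set.Iio e.1) → ULift.{u+1} K))
          ≤ Cardinal.sum fun _ : ↥(Set.Iio o) => lift.{u+1} θ := by
            refine Cardinal.sum_le_sum _ _ fun e => ?_
            have hμ : (e.1).card < θ := Cardinal.lt_ord.mp e.2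
            have : #(↥(Set.Iio e.1) → ULift.{u+1} K) =
                lift.{u+1} (κ ^ (e.1).card) := by
              rw [← Cardinal.power_def, Ordinal.mk_Iio_ordinal, Cardinal.mk_uLift, hK,
                Cardinal.lift_power]
            rw [this]
            refine Cardinal.lift_le.mpr ?_
            calc κ ^ (e.1).card ≤ θ ^ (e.1).card :=
                  Cardinal.power_le_power_right hκ.le
              _ ≤ θ ^< θ := Cardinal.le_powerlt θ hμ
              _ = θ := hpow
        _ = #(↥(Set.Iio o)) * lift.{u+1} θ := Cardinal.sum_const' _ _
        _ = lift.{u+1} θ * lift.{u+1} θ := by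
            rw [Ordinal.mk_Iio_ordinal, ho, Cardinal.card_ord]
        _ = lift.{u+1} θ := Cardinal.mul_eq_self (by simpa using hθ)
    have hfin : lift.{u+1} (Order.succ θ) ≤ lift.{u+1} θ := by
      rw [← hα]; exact hcard.trans hsum
    exact absurd (Cardinal.lift_le.mp hfin) (not_le.mpr (Order.lt_succ θ))
  obtain ⟨x, hx⟩ := hex
  have hSne : ∀ η ≤ o, (S F x η).Nonempty := fun η hη => ⟨x, S_anti F x hη hx⟩
  have hbrS : ∀ η < o, br F x η ∈ S F x η := fun η hη => br_mem F x (hSne η hη.le)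
  have hinj : Set.InjOn (br F x) (Set.Iio o) := by
    intro ρ hρ σ hσ hbe
    rcases lt_trichotomy ρ σ with h | h | h
    · exact absurd hbe.symm ((hbrS σ hσ) ρ h).1
    · exact h
    · exact absurd hbe ((hbrS ρ hρ) σ h).1
  set A : Set α := br F x '' Set.Iio o with hAdef
  have hA : #A = θ := by
    have h1 := Cardinal.mk_image_eq_of_injOn_lift (br F x) (Set.Iio o) hinj
    rw [Ordinal.mk_Iio_ordinal, ho, Cardinal.card_ord, Cardinal.lift_lift] at h1
    exact Cardinal.lift_injective h1
  have hfib : ∃ k : K, #{y : α | y ∈ A ∧ F s(y, x) = k} = θ := by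
    by_contra hno
    push_neg at hno
    have hlt : ∀ k : K, #{y : α | y ∈ A ∧ F s(y, x) = k} < θ := fun k =>
      lt_of_le_of_ne (by
        calc #{y : α | y ∈ A ∧ F s(y, x) = k} ≤ #A :=
            Cardinal.mk_le_mk_of_subset fun y hy => hy.1
          _ = θ := hA) (hno k)
    have hcover : A ⊆ ⋃ k : K, {y : α | y ∈ A ∧ F s(y, x) = k} := fun y hy =>
      Set.mem_iUnion.mpr ⟨F s(y, x), hy, rfl⟩
    have hge : θ ≤ #(⋃ k : K, {y : α | y ∈ A ∧ F s(y, x) = k}) :=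
      hA ▸ Cardinal.mk_le_mk_of_subset hcover
    have hlt2 : #(⋃ k : K, {y : α | y ∈ A ∧ F s(y, x) = k}) < θ :=
      lt_of_le_of_lt Cardinal.mk_iUnion_le_sum_mk
        (Cardinal.sum_lt_of_isRegular hreg (by rw [hK]; exact hκ) hlt)
    exact absurd hge (not_le.mpr hlt2)
  obtain ⟨k, hk⟩ := hfib
  refine ⟨{y : α | y ∈ A ∧ F s(y, x) = k}, hk, k, ?_⟩
  rintro a ⟨haA, hak⟩ b ⟨hbA, hbk⟩ hab
  obtain ⟨ρ, hρ, rfl⟩ := haA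
  obtain ⟨σ, hσ, rfl⟩ := hbA
  rcases lt_trichotomy ρ σ with h | h | h
  · exact (((hbrS σ hσ) ρ h).2).trans hak
  · exact absurd (by rw [h]) hab
  · rw [Sym2.eq_swap]
    exact (((hbrS ρ hρ) σ h).2).trans hbk
end

section
/- Let ⟨L, ⟨I_x⟩_{x∈L}⟩ be an indexed template. Then for every subset A ⊆ L, the pair ⟨A, ⟨I_x↾A⟩_{x∈A}⟩ is again an indexed template (where A carries the order inherited from L); in particular the family I(A) := ⋃_{x∈A}(I_x↾A) ∪ {A} is well-founded by the strict subset relation. -/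
/-- `⟨A, ⟨I_x ↾ A⟩_{x ∈ A}⟩` is an indexed template: each `I x` (for `x ∈ A`)
is a family of subsets of `{z ∈ A : z < x}` containing `∅`, closed under finite
unions and intersections, covering `{z ∈ A : z < x}`, monotone in `x`, and such
that `⋃_{x ∈ A} I x ∪ {A}` is well-founded by `⊊`. -/
def IsIndexedTemplateOn {L : Type*} [LinearOrder L] (A : Set L)
    (I : L → Set (Set L)) : Prop :=
  (∀ x ∈ A, ∀ X ∈ I x, X ⊆ {z ∈ A | z < x}) ∧
  (∀ x ∈ A, ∅ ∈ I x) ∧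
  (∀ x ∈ A, ∀ X ∈ I x, ∀ Y ∈ I x, X ∪ Y ∈ I x ∧ X ∩ Y ∈ I x) ∧
  (∀ x ∈ A, ∀ z ∈ A, z < x → ∃ X ∈ I x, z ∈ X) ∧
  (∀ x ∈ A, ∀ y ∈ A, x < y → I x ⊆ I y) ∧
  Set.WellFoundedOn ({B | ∃ x ∈ A, B ∈ I x} ∪ {A}) (· ⊂ ·)

/-- If `⟨L, ⟨I_x⟩_{x∈L}⟩` is an indexed template then, for every `A ⊆ L`,
the pair `⟨A, ⟨I_x ↾ A⟩_{x∈A}⟩` (with the traces `I_x ↾ A = {A ∩ X : X ∈ I_x}`)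
is again an indexed template; in particular
`I(A) = ⋃_{x∈A}(I_x ↾ A) ∪ {A}` is well-founded by `⊊`. -/
theorem isIndexedTemplateOn_restrict {L : Type*} [LinearOrder L]
    (I : L → Set (Set L)) (hI : IsIndexedTemplateOn Set.univ I) (A : Set L) :
    IsIndexedTemplateOn A (fun x => {B | ∃ X ∈ I x, B = A ∩ X}) := by
  obtain ⟨hsub, hempty, hclose, hcof, hmono, hwf⟩ := hI
  haveI : IsStrictOrder (Set L) (· ⊂ ·) :=
    { toIrrefl := ⟨fun a h => h.ne rfl⟩
      toIsTrans := ⟨fun _ _ _ h1 h2 => h1.trans h2⟩ }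
  -- monotonicity for ≤
  have hmono' : ∀ x y : L, x ≤ y → I x ⊆ I y := by
    intro x y hxy
    rcases eq_or_lt_of_le hxy with rfl | h
    · exact subset_rfl
    · exact hmono x trivial y trivial h
  refine ⟨?_, ?_, ?_, ?_, ?_, ?_⟩
  · rintro x hx B ⟨X, hX, rfl⟩ z ⟨hzA, hzX⟩
    exact ⟨hzA, (hsub x trivial X hX hzX).2⟩
  · intro x hx
    exact ⟨∅, hempty x trivial, by simp⟩
  · rintro x hx B ⟨X, hX, rfl⟩ B' ⟨X', hX', rfl⟩
    refine ⟨⟨X ∪ X', (hclose x trivial X hX X' hX').1, ?_⟩,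
      ⟨X ∩ X', (hclose x trivial X hX X' hX').2, ?_⟩⟩
    · ext z; simp only [Set.mem_inter_iff, Set.mem_union]; tauto
    · ext z; simp only [Set.mem_inter_iff]; tauto
  · intro x hx z hz hzx
    obtain ⟨X, hX, hzX⟩ := hcof x trivial z trivial hzx
    exact ⟨A ∩ X, ⟨X, hX, rfl⟩, hz, hzX⟩
  · rintro x hx y hy hxy B ⟨X, hX, rfl⟩
    exact ⟨X, hmono x trivial y trivial hxy hX, rfl⟩
  · rw [Set.wellFoundedOn_iff_no_descending_seq]
    intro f hf
    -- shift past a possible initial `A`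
    have htrace : ∀ n, f (n + 1) ∈ {B | ∃ x ∈ A, B ∈
        {B | ∃ X ∈ I x, B = A ∩ X}} := by
      intro n
      rcases hf (n + 1) with h | h
      · exact h
      · exfalso
        have hlt : f (n + 1) ⊂ f n := f.map_rel_iff.2 (by omega)
        rw [Set.mem_singleton_iff] at h
        rw [h] at hlt
        rcases hf n with h2 | h2
        · obtain ⟨x, hx, X, hX, hfn⟩ := h2
          have : f n ⊆ A := by rw [hfn]; exact Set.inter_subset_left
          exact absurd this hlt.not_subset
        · rw [Set.mem_singleton_iff] at h2
          rw [h2] at hlt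
          exact hlt.ne rfl
    choose x hxA X hX hfX using htrace
    -- maxima
    let m : ℕ → L := fun n => Nat.rec (x 0) (fun k mk => max mk (x (k + 1))) n
    have hm0 : m 0 = x 0 := rfl
    have hms : ∀ n, m (n + 1) = max (m n) (x (n + 1)) := fun n => rfl
    -- intersections
    let Z : ℕ → Set L := fun n => Nat.rec (X 0) (fun k Zk => Zk ∩ X (k + 1)) n
    have hZ0 : Z 0 = X 0 := rfl
    have hZs : ∀ n, Z (n + 1) = Z n ∩ X (n + 1) := fun n => rfl
    have hZmem : ∀ n, Z n ∈ I (m n) := by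
      intro n
      induction n with
      | zero => exact hX 0
      | succ k ih =>
        rw [hZs, hms]
        refine (hclose _ trivial _ ?_ _ ?_).2
        · exact hmono' _ _ (le_max_left _ _) ih
        · exact hmono' _ _ (le_max_right _ _) (hX (k + 1))
    have hAZ : ∀ n, A ∩ Z n = f (n + 1) := by
      intro n
      induction n with
      | zero => exact (hfX 0).symm
      | succ k ih =>
        have hlt : f (k + 2) ⊂ f (k + 1) := f.map_rel_iff.2 (by omega)
        rw [hZs]
        have hdistr : A ∩ (Z k ∩ X (k + 1)) = (A ∩ Z k) ∩ (A ∩ X (k + 1)) := by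
          ext z; simp only [Set.mem_inter_iff]; tauto
        rw [hdistr, ih, ← hfX (k + 1)]
        exact Set.inter_eq_right.2 hlt.subset
    have hZchain : ∀ n, Z (n + 1) ⊂ Z n := by
      intro n
      refine ⟨hZs n ▸ Set.inter_subset_left, fun hsub => ?_⟩
      have : f (n + 2) = f (n + 1) := by
        rw [← hAZ (n + 1), ← hAZ n]
        exact congrArg (A ∩ ·) (subset_antisymm (hZs n ▸ Set.inter_subset_left) hsub)
      exact (f.map_rel_iff.2 (show n + 2 > n + 1 by omega)).ne this
    rw [Set.wellFoundedOn_iff_no_descending_seq] at hwf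
    exact hwf (RelEmbedding.natGT Z hZchain) (fun n => Or.inl ⟨m n, trivial, hZmem n⟩)
end

section
/- Let ⟨L, ⟨I_x⟩_{x∈L}⟩ be an indexed template, and for X ⊆ L let Dp(X) denote the ordinal rank of X as an element of the well-founded partial order (I(X), ⊊). Then for every A ⊆ L: (a) if Y ∈ I(A), then Dp(Y) ≤ rank_{I(A)}(Y), the rank of Y in (I(A), ⊊); (b) if X ⊆ A then Dp(X) ≤ Dp(A); and (c) if x ∈ A, Y is a proper subset of A ∩ (L_x ∪ {x}), and Y ∩ L_x ∈ I_x↾A, then Dp(Y) < Dp(A); in particular Dp(X) < Dp(A) for every X ∈ I_x↾A. -/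
set_option linter.deprecated false
set_option linter.unusedSectionVars false
set_option maxHeartbeats 1000000

/-- `I(X) = ⋃_{x ∈ X} (I_x ↾ X) ∪ {X}`. -/
def templateTrace {L : Type*} (I : L → Set (Set L)) (X : Set L) : Set (Set L) :=
  {B | ∃ x ∈ X, ∃ Y ∈ I x, B = X ∩ Y} ∪ {X}

theorem self_mem_templateTrace {L : Type*} (I : L → Set (Set L)) (X : Set L) :
    X ∈ templateTrace I X :=
  Or.inr rfl

/-- `Dp(X)`: the rank of `X` in the well-founded partial order `(I(X), ⊊)`. -/
noncomputable def Dp {L : Type*} [LinearOrder L] (I : L → Set (Set L))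
    (hwf : ∀ X : Set L, (templateTrace I X).WellFoundedOn (· ⊂ ·))
    (X : Set L) : Ordinal :=
  Acc.rank ((hwf X).apply (⟨X, self_mem_templateTrace I X⟩ : templateTrace I X))

section Aux

noncomputable def WellFounded.rank {α : Type*} {r : α → α → Prop} (hwf : WellFounded r)
    (a : α) : Ordinal :=
  Acc.rank (hwf.apply a)

theorem WellFounded.rank_eq {α : Type*} {r : α → α → Prop} (hwf : WellFounded r) (a : α) :
    hwf.rank a = ⨆ b : { b // r b a }, Order.succ (hwf.rank b) :=
  Acc.rank_eq _

theorem WellFounded.rank_lt_of_rel {α : Type*} {r : α → α → Prop} (hwf : WellFounded r)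
    {a b : α} (h : r a b) : hwf.rank a < hwf.rank b :=
  Acc.rank_lt_of_rel _ h

theorem Dp_eq {L : Type*} [LinearOrder L] (I : L → Set (Set L))
    (hwf : ∀ X : Set L, (templateTrace I X).WellFoundedOn (· ⊂ ·)) (X : Set L) :
    Dp I hwf X = WellFounded.rank (hwf X) (⟨X, self_mem_templateTrace I X⟩ : templateTrace I X) :=
  rfl

theorem rank_le_of_subset {α : Type*} {s t : Set (Set α)}
    (hs : s.WellFoundedOn (· ⊂ ·)) (ht : t.WellFoundedOn (· ⊂ ·))
    (hst : s ⊆ t) :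
    ∀ a : s, WellFounded.rank hs a ≤ WellFounded.rank ht ⟨a.1, hst a.2⟩ := by
  intro a
  induction a using WellFounded.induction hs with
  | _ a ih =>
    refine (WellFounded.rank_eq _ _).trans_le ?_
    apply ciSup_le'
    rintro ⟨b, hb⟩
    have h1 := ih b hb
    have h2 : WellFounded.rank ht ⟨b.1, hst b.2⟩ < WellFounded.rank ht ⟨a.1, hst a.2⟩ :=
      WellFounded.rank_lt_of_rel ht hb
    exact Order.succ_le_of_lt (h1.trans_lt h2)

theorem rank_mono_of_subset {α : Type*} {s : Set (Set α)}
    (hs : s.WellFoundedOn (· ⊂ ·)) {a b : Set α} (ha : a ∈ s) (hb : b ∈ s)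
    (h : a ⊆ b) :
    WellFounded.rank hs ⟨a, ha⟩ ≤ WellFounded.rank hs ⟨b, hb⟩ := by
  rcases h.lt_or_eq with h' | h'
  · exact (WellFounded.rank_lt_of_rel hs (a := ⟨a, ha⟩) (b := ⟨b, hb⟩) h').le
  · exact le_of_eq (congrArg _ (Subtype.ext h'))

variable {L : Type*} [LinearOrder L] {I : L → Set (Set L)}

theorem inter_mem_trace {A Z : Set L} {x : L} (hx : x ∈ A) (hZ : Z ∈ I x) :
    A ∩ Z ∈ templateTrace I A :=
  Or.inl ⟨x, hx, Z, hZ, rfl⟩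

variable (htemp : IsIndexedTemplateOn Set.univ I)
include htemp

theorem lt_of_mem_I {x z : L} {Z : Set L} (hZ : Z ∈ I x) (hz : z ∈ Z) : z < x :=
  (htemp.1 x trivial Z hZ hz).2

theorem mem_I_of_le {x y : L} {W : Set L} (h : y ≤ x) (hW : W ∈ I y) : W ∈ I x := by
  rcases h.lt_or_eq with h' | h'
  · exact htemp.2.2.2.2.1 y trivial x trivial h' hW
  · exact h' ▸ hW

theorem inter_mem_I {x : L} {W Z : Set L} (hW : W ∈ I x) (hZ : Z ∈ I x) :
    W ∩ Z ∈ I x :=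
  (htemp.2.2.1 x trivial W hW Z hZ).2

theorem union_mem_I {x : L} {W Z : Set L} (hW : W ∈ I x) (hZ : Z ∈ I x) :
    W ∪ Z ∈ I x :=
  (htemp.2.2.1 x trivial W hW Z hZ).1

theorem inter_ssubset {A Z : Set L} {x : L} (hx : x ∈ A) (hZ : Z ∈ I x) :
    A ∩ Z ⊂ A := by
  refine (Set.ssubset_iff_of_subset Set.inter_subset_left).2
    ⟨x, hx, fun h => lt_irrefl x (lt_of_mem_I htemp hZ h.2)⟩

theorem trace_subset_trace {A Y : Set L} (hY : Y ∈ templateTrace I A) :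
    templateTrace I Y ⊆ templateTrace I A := by
  intro B hB
  rcases hB with hB | hB
  · obtain ⟨y, hyY, W, hW, rfl⟩ := hB
    rcases hY with hY | hY
    · obtain ⟨x₀, hx₀, Z, hZ, rfl⟩ := hY
      have hyx : y < x₀ := lt_of_mem_I htemp hZ hyY.2
      have hW' : W ∈ I x₀ := mem_I_of_le htemp hyx.le hW
      have : (A ∩ Z) ∩ W = A ∩ (Z ∩ W) := Set.inter_assoc A Z W
      exact this ▸ inter_mem_trace hx₀ (inter_mem_I htemp hZ hW')
    · rcases hY
      exact inter_mem_trace hyY hW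
  · rcases hB
    exact hY

/-- Key lemma: for `X ⊆ A`, `x ∈ X`, `Z ∈ I x`,
`rank_{I(X)}(X ∩ Z) ≤ rank_{I(A)}(A ∩ Z)` (stated via an ordinal bound). -/
theorem keyK (hwf : ∀ X : Set L, (templateTrace I X).WellFoundedOn (· ⊂ ·)) :
    ∀ o : Ordinal, ∀ A X : Set L, ∀ hXA : X ⊆ A, ∀ x : L, ∀ hx : x ∈ X,
      ∀ Z : Set L, ∀ hZ : Z ∈ I x,
      WellFounded.rank (hwf A)
        (⟨A ∩ Z, inter_mem_trace (hXA hx) hZ⟩ : templateTrace I A) ≤ o →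
      WellFounded.rank (hwf X)
        (⟨X ∩ Z, inter_mem_trace hx hZ⟩ : templateTrace I X) ≤ o := by
  intro o
  induction o using Ordinal.induction with
  | h o IH =>
  intro A X hXA x hx Z hZ hle
  refine (WellFounded.rank_eq _ _).trans_le ?_
  apply ciSup_le'
  rintro ⟨⟨C, hC⟩, hlt⟩
  -- hlt : C ⊂ X ∩ Z
  have hlt' : C ⊂ X ∩ Z := hlt
  rcases hC with hC | hC
  swap
  · rcases hC
    exact absurd (hlt'.trans_le Set.inter_subset_left) (lt_irrefl _)
  obtain ⟨y, hyX, W, hW, rfl⟩ := hC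
  -- C = X ∩ W
  have hCZ : X ∩ W ⊆ Z := fun z hz => (hlt'.1 hz).2
  have hCeq : X ∩ W = X ∩ (W ∩ Z) :=
    Set.Subset.antisymm (fun z hz => ⟨hz.1, hz.2, hCZ hz⟩) (fun z hz => ⟨hz.1, hz.2.1⟩)
  -- witness u
  set u := max x y with hu_def
  have hu : u ∈ X := by rcases max_choice x y with h | h <;> rw [hu_def, h] <;> assumption
  have hWu : W ∈ I u := mem_I_of_le htemp (le_max_right x y) hW
  have hZu : Z ∈ I u := mem_I_of_le htemp (le_max_left x y) hZ
  have hWZu : W ∩ Z ∈ I u := inter_mem_I htemp hWu hZu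
  -- properness downstairs in A
  obtain ⟨z, hz1, hz2⟩ := Set.exists_of_ssubset hlt'
  have hzW : z ∉ W := fun h => hz2 ⟨hz1.1, h⟩
  have hss : A ∩ (W ∩ Z) ⊂ A ∩ Z :=
    (Set.ssubset_iff_of_subset (s := A ∩ (W ∩ Z)) (t := A ∩ Z) (fun t ht => ⟨ht.1, ht.2.2⟩)).2
      ⟨z, ⟨hXA hz1.1, hz1.2⟩, fun h => hzW h.2.1⟩
  have h2 : WellFounded.rank (hwf A)
      (⟨A ∩ (W ∩ Z), inter_mem_trace (hXA hu) hWZu⟩ : templateTrace I A)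
      < WellFounded.rank (hwf A)
      (⟨A ∩ Z, inter_mem_trace (hXA hx) hZ⟩ : templateTrace I A) :=
    WellFounded.rank_lt_of_rel (hwf A) hss
  have h3 := IH _ (h2.trans_le hle) A X hXA u hu (W ∩ Z) hWZu le_rfl
  have h4 : WellFounded.rank (hwf X) (⟨X ∩ W, Or.inl ⟨y, hyX, W, hW, rfl⟩⟩ : templateTrace I X)
      = WellFounded.rank (hwf X) (⟨X ∩ (W ∩ Z), inter_mem_trace hu hWZu⟩ : templateTrace I X) :=
    congrArg _ (Subtype.ext hCeq)
  calc Order.succ (WellFounded.rank (hwf X)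
        (⟨X ∩ W, Or.inl ⟨y, hyX, W, hW, rfl⟩⟩ : templateTrace I X))
      ≤ o := Order.succ_le_of_lt (by rw [h4]; exact h3.trans_lt (h2.trans_le hle))


theorem partA (hwf : ∀ X : Set L, (templateTrace I X).WellFoundedOn (· ⊂ ·)) :
    ∀ A Y : Set L, ∀ hY : Y ∈ templateTrace I A,
      Dp I hwf Y ≤ WellFounded.rank (hwf A) (⟨Y, hY⟩ : templateTrace I A) := by
  intro A Y hY
  exact rank_le_of_subset (hwf Y) (hwf A) (trace_subset_trace htemp hY)
    ⟨Y, self_mem_templateTrace I Y⟩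

theorem partD (hwf : ∀ X : Set L, (templateTrace I X).WellFoundedOn (· ⊂ ·)) :
    ∀ A : Set L, ∀ x ∈ A, ∀ Z ∈ I x, Dp I hwf (A ∩ Z) < Dp I hwf A := by
  intro A x hx Z hZ
  have h1 := partA htemp hwf A (A ∩ Z) (inter_mem_trace hx hZ)
  have h2 : WellFounded.rank (hwf A) (⟨A ∩ Z, inter_mem_trace hx hZ⟩ : templateTrace I A)
      < WellFounded.rank (hwf A) (⟨A, self_mem_templateTrace I A⟩ : templateTrace I A) :=
    WellFounded.rank_lt_of_rel (hwf A) (inter_ssubset htemp hx hZ)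
  exact h1.trans_lt h2

theorem partB (hwf : ∀ X : Set L, (templateTrace I X).WellFoundedOn (· ⊂ ·)) :
    ∀ A X : Set L, X ⊆ A → Dp I hwf X ≤ Dp I hwf A := by
  intro A X hXA
  simp only [Dp_eq]
  refine (WellFounded.rank_eq _ _).trans_le ?_
  apply ciSup_le'
  rintro ⟨⟨B, hB⟩, hlt⟩
  have hlt' : B ⊂ X := hlt
  rcases hB with hB | hB
  swap
  · rcases hB; exact absurd hlt' (lt_irrefl _)
  obtain ⟨x, hxX, Z, hZ, rfl⟩ := hB
  have hK := keyK htemp hwf _ A X hXA x hxX Z hZ le_rfl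
  have h2 : WellFounded.rank (hwf A) (⟨A ∩ Z, inter_mem_trace (hXA hxX) hZ⟩ : templateTrace I A)
      < WellFounded.rank (hwf A) (⟨A, self_mem_templateTrace I A⟩ : templateTrace I A) :=
    WellFounded.rank_lt_of_rel (hwf A) (inter_ssubset htemp (hXA hxX) hZ)
  exact Order.succ_le_of_lt (hK.trans_lt h2)

theorem partC (hwf : ∀ X : Set L, (templateTrace I X).WellFoundedOn (· ⊂ ·)) :
    ∀ A : Set L, ∀ x ∈ A, ∀ Y : Set L,
      Y ⊂ A ∩ ({z | z < x} ∪ {x}) →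
      (∃ Z ∈ I x, Y ∩ {z | z < x} = A ∩ Z) →
      Dp I hwf Y < Dp I hwf A := by
  intro A x hxA Y hY hZex
  obtain ⟨Z, hZ, hYZ⟩ := hZex
  have hYA : Y ⊆ A := hY.1.trans Set.inter_subset_left
  by_cases hxY : x ∈ Y
  case neg =>
    have hYeq : Y = A ∩ Z := by
      rw [← hYZ]
      apply Set.Subset.antisymm _ Set.inter_subset_left
      intro z hz
      rcases (hY.1 hz).2 with h | h
      · exact ⟨hz, h⟩
      · exfalso; apply hxY; rw [Set.mem_singleton_iff] at h; rw [← h]; exact hz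
    rw [hYeq]
    exact partD htemp hwf A x hxA Z hZ
  case pos =>
    obtain ⟨w, hw1, hw2⟩ := Set.exists_of_ssubset hY
    have hwx : w < x := by
      rcases hw1.2 with h | h
      · exact h
      · exfalso; apply hw2; rw [Set.mem_singleton_iff] at h; rw [h]; exact hxY
    have hwZ : w ∉ Z := by
      intro h
      apply hw2
      have hmem : w ∈ A ∩ Z := ⟨hw1.1, h⟩
      rw [← hYZ] at hmem
      exact hmem.1
    obtain ⟨V, hV, hwV⟩ := htemp.2.2.2.1 x trivial w trivial hwx
    have hZ' : Z ∪ V ∈ I x := union_mem_I htemp hZ hV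
    have hss1 : A ∩ Z ⊂ A ∩ (Z ∪ V) :=
      (Set.ssubset_iff_of_subset (s := A ∩ Z) (t := A ∩ (Z ∪ V))
        (fun t ht => ⟨ht.1, Or.inl ht.2⟩)).2 ⟨w, ⟨hw1.1, Or.inr hwV⟩, fun h => hwZ h.2⟩
    have h2 : WellFounded.rank (hwf A) (⟨A ∩ Z, inter_mem_trace hxA hZ⟩ : templateTrace I A)
        < WellFounded.rank (hwf A) (⟨A ∩ (Z ∪ V), inter_mem_trace hxA hZ'⟩ : templateTrace I A) :=
      WellFounded.rank_lt_of_rel (hwf A) hss1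
    have h3 : WellFounded.rank (hwf A) (⟨A ∩ (Z ∪ V), inter_mem_trace hxA hZ'⟩ : templateTrace I A)
        < WellFounded.rank (hwf A) (⟨A, self_mem_templateTrace I A⟩ : templateTrace I A) :=
      WellFounded.rank_lt_of_rel (hwf A) (inter_ssubset htemp hxA hZ')
    have hbound : Dp I hwf Y ≤ Order.succ (WellFounded.rank (hwf A)
        (⟨A ∩ Z, inter_mem_trace hxA hZ⟩ : templateTrace I A)) := by
      simp only [Dp_eq]
      refine (WellFounded.rank_eq _ _).trans_le ?_
      apply ciSup_le'
      rintro ⟨⟨B, hB⟩, hlt⟩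
      have hlt' : B ⊂ Y := hlt
      rcases hB with hB | hB
      swap
      · rcases hB; exact absurd hlt' (lt_irrefl _)
      obtain ⟨y, hyY, W, hW, rfl⟩ := hB
      have hyx : y ≤ x := by
        rcases (hY.1 hyY).2 with h | h
        · exact le_of_lt h
        · rw [Set.mem_singleton_iff] at h; exact le_of_eq h
      have hWx : W ∈ I x := mem_I_of_le htemp hyx hW
      have hWZx : W ∩ Z ∈ I x := inter_mem_I htemp hWx hZ
      have hsubZ : Y ∩ W ⊆ Z := by
        intro z hz
        have hzx : z < x := lt_of_mem_I htemp hWx hz.2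
        have hmem : z ∈ Y ∩ {z | z < x} := ⟨hz.1, hzx⟩
        rw [hYZ] at hmem
        exact hmem.2
      have hBeq : Y ∩ W = Y ∩ (W ∩ Z) :=
        Set.Subset.antisymm (fun z hz => ⟨hz.1, hz.2, hsubZ hz⟩) (fun z hz => ⟨hz.1, hz.2.1⟩)
      have hk := keyK htemp hwf _ A Y hYA x hxY (W ∩ Z) hWZx le_rfl
      have hmono : WellFounded.rank (hwf A)
          (⟨A ∩ (W ∩ Z), inter_mem_trace hxA hWZx⟩ : templateTrace I A)
          ≤ WellFounded.rank (hwf A) (⟨A ∩ Z, inter_mem_trace hxA hZ⟩ : templateTrace I A) :=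
        rank_mono_of_subset (hwf A) _ _ (fun t ht => ⟨ht.1, ht.2.2⟩)
      have h4 : WellFounded.rank (hwf Y) (⟨Y ∩ W, Or.inl ⟨y, hyY, W, hW, rfl⟩⟩ : templateTrace I Y)
          = WellFounded.rank (hwf Y) (⟨Y ∩ (W ∩ Z), inter_mem_trace hxY hWZx⟩ : templateTrace I Y) :=
        congrArg _ (Subtype.ext hBeq)
      exact Order.succ_le_succ (by rw [h4]; exact hk.trans hmono)
    exact hbound.trans_lt ((Order.succ_le_of_lt h2).trans_lt h3)

theorem Dp_properties' (hwf : ∀ X : Set L, (templateTrace I X).WellFoundedOn (· ⊂ ·)) :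
    (∀ A Y : Set L, ∀ hY : Y ∈ templateTrace I A,
        Dp I hwf Y ≤ WellFounded.rank (hwf A) (⟨Y, hY⟩ : templateTrace I A)) ∧
    (∀ A X : Set L, X ⊆ A → Dp I hwf X ≤ Dp I hwf A) ∧
    (∀ A : Set L, ∀ x ∈ A, ∀ Y : Set L,
        Y ⊂ A ∩ ({z | z < x} ∪ {x}) →
        (∃ Z ∈ I x, Y ∩ {z | z < x} = A ∩ Z) →
        Dp I hwf Y < Dp I hwf A) ∧
    (∀ A : Set L, ∀ x ∈ A, ∀ Z ∈ I x, Dp I hwf (A ∩ Z) < Dp I hwf A) :=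
  ⟨partA htemp hwf, partB htemp hwf, partC htemp hwf, partD htemp hwf⟩

end Aux

/-- Properties of `Dp`: (a) if `Y ∈ I(A)` then `Dp(Y) ≤ rank_{I(A)}(Y)`;
(b) if `X ⊆ A` then `Dp(X) ≤ Dp(A)`; (c) if `x ∈ A`, `Y ⊊ A ∩ (L_x ∪ {x})` and
`Y ∩ L_x ∈ I_x ↾ A`, then `Dp(Y) < Dp(A)`; in particular `Dp(X) < Dp(A)` for
every `X ∈ I_x ↾ A`. -/
theorem Dp_properties {L : Type*} [LinearOrder L] (I : L → Set (Set L))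
    (htemp : IsIndexedTemplateOn Set.univ I)
    (hwf : ∀ X : Set L, (templateTrace I X).WellFoundedOn (· ⊂ ·)) :
    (∀ A Y : Set L, ∀ hY : Y ∈ templateTrace I A,
        Dp I hwf Y ≤ Acc.rank ((hwf A).apply (⟨Y, hY⟩ : templateTrace I A))) ∧
    (∀ A X : Set L, X ⊆ A → Dp I hwf X ≤ Dp I hwf A) ∧
    (∀ A : Set L, ∀ x ∈ A, ∀ Y : Set L,
        Y ⊂ A ∩ ({z | z < x} ∪ {x}) →
        (∃ Z ∈ I x, Y ∩ {z | z < x} = A ∩ Z) →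
        Dp I hwf Y < Dp I hwf A) ∧
    (∀ A : Set L, ∀ x ∈ A, ∀ Z ∈ I x, Dp I hwf (A ∩ Z) < Dp I hwf A) :=
  Dp_properties' htemp hwf
end

section
/- cov(N) ≤ 𝔟_⋔ ≤ non(M): every family F ⊆ 2^ω of cardinality less than cov(N) is ⋔-bounded (there is g ∈ 2^ω with f ⋔ g for all f ∈ F), and every non-meager subset of 2^ω is a ⋔-unbounded family. -/
open MeasureTheory

def seg (k : ℕ) : Finset ℕ := Finset.Ico (2 ^ (k + 1) - 2) (2 ^ (k + 2) - 2)

def eqSeg (f g : ℕ → Bool) (k : ℕ) : Prop := ∀ i ∈ seg k, f i = g i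

/-- `f ⋔ g`: `f ↾ I_k ≠ g ↾ I_k` for all but finitely many `k`. -/
def pfork (f g : ℕ → Bool) : Prop := ∃ n : ℕ, ∀ k, n ≤ k → ¬ eqSeg f g k

/-- `μ` is the uniform product (Haar) probability measure on `2^ω`. -/
def IsUniformProductMeasure (μ : Measure (ℕ → Bool)) : Prop :=
  IsProbabilityMeasure μ ∧
  ∀ (s : Finset ℕ) (σ : ℕ → Bool),
    μ {f : ℕ → Bool | ∀ i ∈ s, f i = σ i} = (2 : ENNReal)⁻¹ ^ s.card

/-- `cov(N)`: the least number of null sets covering `2^ω`. -/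
noncomputable def covNull (μ : Measure (ℕ → Bool)) : Cardinal :=
  sInf {c : Cardinal | ∃ 𝒞 : Set (Set (ℕ → Bool)), Cardinal.mk 𝒞 = c ∧
    (∀ A ∈ 𝒞, μ A = 0) ∧ ⋃₀ 𝒞 = Set.univ}

/-- `𝔟_⋔`: the least size of a `⋔`-unbounded family in `2^ω`. -/
noncomputable def bPfork : Cardinal :=
  sInf {c : Cardinal | ∃ F : Set (ℕ → Bool), Cardinal.mk F = c ∧
    ¬ ∃ g : ℕ → Bool, ∀ f ∈ F, pfork f g}

/-- `non(M)`: the least size of a non-meager subset of `2^ω`. -/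
noncomputable def nonMeagre : Cardinal :=
  sInf {c : Cardinal | ∃ S : Set (ℕ → Bool), Cardinal.mk S = c ∧ ¬ IsMeagre S}

lemma seg_card (k : ℕ) : (seg k).card = 2 ^ (k + 1) := by
  have h1 : (2:ℕ) ≤ 2 ^ (k + 1) := Nat.pow_le_pow_right two_pos (Nat.succ_le_succ (Nat.zero_le k)) |>.trans_eq' (by norm_num)
  have h2 : (2:ℕ) ^ (k + 2) = 2 ^ (k + 1) + 2 ^ (k + 1) := by ring
  simp only [seg, Nat.card_Ico]
  omega

lemma measure_eqSeg (μ : Measure (ℕ → Bool)) (hμ : IsUniformProductMeasure μ)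
    (f : ℕ → Bool) (k : ℕ) : μ {g | eqSeg f g k} = (2 : ENNReal)⁻¹ ^ 2 ^ (k + 1) := by
  have h := hμ.2 (seg k) f
  rw [seg_card] at h
  have hset : {g | eqSeg f g k} = {g : ℕ → Bool | ∀ i ∈ seg k, g i = f i} := by
    ext g; exact forall₂_congr fun i _ => eq_comm
  rw [hset, h]

lemma null_nforked (μ : Measure (ℕ → Bool)) (hμ : IsUniformProductMeasure μ)
    (f : ℕ → Bool) : μ {g | ¬ pfork f g} = 0 := by
  have key : ∀ n, μ {g | ¬ pfork f g} ≤ (2 : ENNReal)⁻¹ ^ n * 2 := by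
    intro n
    have hsub : {g | ¬ pfork f g} ⊆ ⋃ k, {g | eqSeg f g (n + k)} := by
      intro g hg
      simp only [Set.mem_setOf_eq, pfork] at hg
      push_neg at hg
      obtain ⟨k, hk, he⟩ := hg n
      exact Set.mem_iUnion.2 ⟨k - n, by rw [Nat.add_sub_cancel' hk]; exact he⟩
    calc μ {g | ¬ pfork f g} ≤ ∑' k, μ {g | eqSeg f g (n + k)} :=
          (measure_mono hsub).trans (measure_iUnion_le _)
      _ ≤ ∑' k : ℕ, (2 : ENNReal)⁻¹ ^ (n + k) := by
          refine ENNReal.tsum_le_tsum fun k => ?_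
          rw [measure_eqSeg μ hμ f (n + k)]
          refine pow_le_pow_of_le_one zero_le (by simp) ?_
          exact (Nat.lt_two_pow_self (n := n + k)).le.trans
            (Nat.pow_le_pow_right two_pos (Nat.le_succ _))
      _ = (2 : ENNReal)⁻¹ ^ n * ∑' k : ℕ, (2 : ENNReal)⁻¹ ^ k := by
          simp_rw [pow_add, ENNReal.tsum_mul_left]
      _ = (2 : ENNReal)⁻¹ ^ n * 2 := by
          rw [ENNReal.tsum_geometric, ENNReal.one_sub_inv_two, inv_inv]
  have htend : Filter.Tendsto (fun n : ℕ => (2 : ENNReal)⁻¹ ^ n * 2) Filter.atTop (nhds 0) := by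
    have h0 := ENNReal.tendsto_pow_atTop_nhds_zero_of_lt_one
      (by simp : (2 : ENNReal)⁻¹ < 1)
    simpa using ENNReal.Tendsto.mul_const h0 (Or.inr (by norm_num))
  exact le_antisymm (ge_of_tendsto' htend key) zero_le

lemma bounded_of_lt_covNull (μ : Measure (ℕ → Bool)) (hμ : IsUniformProductMeasure μ)
    (F : Set (ℕ → Bool)) (hF : Cardinal.mk F < covNull μ) :
    ∃ g : ℕ → Bool, ∀ f ∈ F, pfork f g := by
  by_contra h
  push_neg at h
  set A : (ℕ → Bool) → Set (ℕ → Bool) := fun f => {g | ¬ pfork f g} with hA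
  have hcov : ⋃₀ (A '' F) = Set.univ := by
    ext g
    simp only [Set.mem_sUnion, Set.mem_univ, iff_true]
    obtain ⟨f, hfF, hnp⟩ := h g
    exact ⟨A f, Set.mem_image_of_mem _ hfF, hnp⟩
  have hmem : Cardinal.mk ↥(A '' F) ∈ {c : Cardinal | ∃ 𝒞 : Set (Set (ℕ → Bool)),
      Cardinal.mk 𝒞 = c ∧ (∀ B ∈ 𝒞, μ B = 0) ∧ ⋃₀ 𝒞 = Set.univ} := by
    refine ⟨A '' F, rfl, ?_, hcov⟩
    rintro B ⟨f, -, rfl⟩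
    exact null_nforked μ hμ f
  have hle : covNull μ ≤ Cardinal.mk ↥(A '' F) := csInf_le (OrderBot.bddBelow _) hmem
  exact absurd (hle.trans Cardinal.mk_image_le) (not_le.2 hF)

lemma nonMeagre_unbounded (S : Set (ℕ → Bool)) (hS : ¬ IsMeagre S) :
    ¬ ∃ g : ℕ → Bool, ∀ f ∈ S, pfork f g := by
  rintro ⟨g, hg⟩
  apply hS
  have hsub : S ⊆ ⋃ n, {f : ℕ → Bool | ∀ k, n ≤ k → ¬ eqSeg f g k} := by
    intro f hf
    obtain ⟨n, hn⟩ := hg f hf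
    exact Set.mem_iUnion.2 ⟨n, hn⟩
  refine (isMeagre_iUnion fun n => ?_).mono hsub
  set C : Set (ℕ → Bool) := {f | ∀ k, n ≤ k → ¬ eqSeg f g k} with hC
  have hopen : ∀ k, IsOpen {f : ℕ → Bool | eqSeg f g k} := by
    intro k
    have hEq : {f : ℕ → Bool | eqSeg f g k}
        = ⋂ i ∈ seg k, (fun f : ℕ → Bool => f i) ⁻¹' {g i} := by
      ext f; simp [eqSeg]
    rw [hEq]
    exact isOpen_biInter_finset fun i _ =>
      (isOpen_discrete _).preimage (continuous_apply i)
  have hclosed : IsClosed C := by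
    have hEq : C = ⋂ k, ⋂ (_ : n ≤ k), {f : ℕ → Bool | eqSeg f g k}ᶜ := by
      ext f; simp [hC]
    rw [hEq]
    exact isClosed_iInter fun k => isClosed_iInter fun _ => (hopen k).isClosed_compl
  have hint : interior C = ∅ := by
    rw [Set.eq_empty_iff_forall_notMem]
    intro f hf
    obtain ⟨I, u, hIu, hsub'⟩ := isOpen_pi_iff.1 isOpen_interior f hf
    set k := max n (I.sup id + 2) with hk
    set f' : ℕ → Bool := fun i => if i ∈ seg k then g i else f i with hf'
    have hnotin : ∀ a ∈ I, a ∉ seg k := by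
      intro a ha
      have h1 : a ≤ I.sup id := Finset.le_sup (f := id) ha
      have h2 : I.sup id + 2 ≤ k := le_max_right _ _
      have h3 : k < 2 ^ k := Nat.lt_two_pow_self (n := k)
      have h4 : (2:ℕ) ^ k ≤ 2 ^ (k + 1) := Nat.pow_le_pow_right two_pos (Nat.le_succ _)
      simp only [seg, Finset.mem_Ico]
      omega
    have hf'mem : f' ∈ (↑I : Set ℕ).pi u := by
      intro a ha
      have : f' a = f a := by simp [hf', hnotin a ha]
      rw [this]
      exact (hIu a ha).2
    have hf'C : f' ∈ C := interior_subset (hsub' hf'mem)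
    refine hf'C k (le_max_left _ _) ?_
    intro i hi
    simp [hf', hi]
  have hnwd : IsNowhereDense C := hclosed.isNowhereDense_iff.2 hint
  exact isMeagre_iff_countable_union_isNowhereDense.2
    ⟨{C}, by simpa using hnwd, Set.countable_singleton _, by simp⟩

lemma univ_not_meagre : ¬ IsMeagre (Set.univ : Set (ℕ → Bool)) := by
  intro h
  have := dense_of_mem_residual (by simpa [IsMeagre] using h)
  simpa using this.nonempty

/-- `cov(N) ≤ 𝔟_⋔ ≤ non(M)`: every family of size `< cov(N)` is `⋔`-bounded,
and every non-meager set is a `⋔`-unbounded family. -/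
theorem covNull_le_bPfork_le_nonMeagre (μ : Measure (ℕ → Bool))
    (hμ : IsUniformProductMeasure μ) :
    (∀ F : Set (ℕ → Bool), Cardinal.mk F < covNull μ →
      ∃ g : ℕ → Bool, ∀ f ∈ F, pfork f g) ∧
    (∀ S : Set (ℕ → Bool), ¬ IsMeagre S → ¬ ∃ g : ℕ → Bool, ∀ f ∈ S, pfork f g) ∧
    covNull μ ≤ bPfork ∧ bPfork ≤ nonMeagre := by
  refine ⟨bounded_of_lt_covNull μ hμ, nonMeagre_unbounded, ?_, ?_⟩
  · refine le_csInf ?_ ?_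
    · exact ⟨Cardinal.mk ↥(Set.univ : Set (ℕ → Bool)),
        Set.univ, rfl, nonMeagre_unbounded Set.univ univ_not_meagre⟩
    · rintro c ⟨F, rfl, hF⟩
      by_contra hlt
      exact hF (bounded_of_lt_covNull μ hμ F (not_le.1 hlt))
  · refine le_csInf ?_ ?_
    · exact ⟨Cardinal.mk ↥(Set.univ : Set (ℕ → Bool)), Set.univ, rfl, univ_not_meagre⟩
    · rintro c ⟨S, rfl, hS⟩
      exact csInf_le (OrderBot.bddBelow _) ⟨S, rfl, nonMeagre_unbounded S hS⟩
end

section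
/- cov(M) ≤ 𝔡_⋔ ≤ non(N): every ⋔-dominating family C ⊆ 2^ω gives a covering of 2^ω by |C| many meager sets (so cov(M) ≤ 𝔡_⋔), and every non-null subset of 2^ω is a ⋔-dominating family (so 𝔡_⋔ ≤ non(N)). -/
open MeasureTheory

/-- `cov(M)`: the least number of meager sets covering `2^ω`. -/
noncomputable def covMeagre : Cardinal :=
  sInf {c : Cardinal | ∃ 𝒞 : Set (Set (ℕ → Bool)), Cardinal.mk 𝒞 = c ∧
    (∀ A ∈ 𝒞, IsMeagre A) ∧ ⋃₀ 𝒞 = Set.univ}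

/-- `𝔡_⋔`: the least size of a `⋔`-dominating family in `2^ω`. -/
noncomputable def dPfork : Cardinal :=
  sInf {c : Cardinal | ∃ C : Set (ℕ → Bool), Cardinal.mk C = c ∧
    ∀ f : ℕ → Bool, ∃ g ∈ C, pfork f g}

/-- `non(N)`: the least size of a non-null subset of `2^ω`. -/
noncomputable def nonNull (μ : Measure (ℕ → Bool)) : Cardinal :=
  sInf {c : Cardinal | ∃ S : Set (ℕ → Bool), Cardinal.mk S = c ∧ μ S ≠ 0}

lemma seg_nonempty (k : ℕ) : (seg k).Nonempty := by
  rw [← Finset.card_pos, seg_card]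
  positivity

lemma exists_seg_large (n M : ℕ) : ∃ k, n ≤ k ∧ ∀ i ∈ seg k, M < i := by
  refine ⟨n + M + 1, by omega, fun i hi => ?_⟩
  simp only [seg, Finset.mem_Ico] at hi
  have h1 : M + 2 < 2 ^ (M + 2) := Nat.lt_two_pow_self
  have h2 : (2:ℕ) ^ (M + 2) ≤ 2 ^ (n + M + 2) :=
    Nat.pow_le_pow_right (by norm_num) (by omega)
  have h3 : (2:ℕ) ^ (n + M + 1 + 1) = 2 ^ (n + M + 2) := by ring
  omega

lemma isClopen_eqSeg (g : ℕ → Bool) (k : ℕ) : IsClopen {f : ℕ → Bool | eqSeg f g k} := by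
  have : {f : ℕ → Bool | eqSeg f g k} = ⋂ i ∈ (seg k : Finset ℕ), {f : ℕ → Bool | f i = g i} := by
    ext f; simp [eqSeg]
  rw [this]
  have hco : ∀ i : ℕ, IsClopen {f : ℕ → Bool | f i = g i} := by
    intro i
    have : {f : ℕ → Bool | f i = g i} = (fun f : ℕ → Bool => f i) ⁻¹' {g i} := rfl
    rw [this]
    exact (isClopen_discrete _).preimage (continuous_apply i)
  constructor
  · exact isClosed_biInter fun i _ => (hco i).isClosed
  · exact Set.Finite.isOpen_biInter (Finset.finite_toSet _) fun i _ => (hco i).isOpen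

lemma dense_eqSeg_tail (g : ℕ → Bool) (n : ℕ) :
    Dense {f : ℕ → Bool | ∃ k, n ≤ k ∧ eqSeg f g k} := by
  rw [dense_iff_inter_open]
  rintro U hU ⟨x, hx⟩
  obtain ⟨I, u, hIu, hsub⟩ := isOpen_pi_iff.mp hU x hx
  obtain ⟨k, hnk, hk⟩ := exists_seg_large n (I.sup id)
  refine ⟨fun i => if i ∈ seg k then g i else x i,
    hsub fun i hi => ?_, k, hnk, fun i hi => by simp [hi]⟩
  have hni : i ∉ seg k := by
    intro hmem
    exact absurd (hk i hmem) (not_lt.mpr (Finset.le_sup (f := id) hi))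
  simpa [hni] using (hIu i hi).2

lemma isMeagre_pfork (g : ℕ → Bool) : IsMeagre {f : ℕ → Bool | pfork f g} := by
  have : {f : ℕ → Bool | pfork f g} =
      ⋃ n : ℕ, {f : ℕ → Bool | ∀ k, n ≤ k → ¬ eqSeg f g k} := by
    ext f; simp [pfork]
  rw [this]
  refine isMeagre_iUnion fun n => ?_
  have hclosed : IsClosed {f : ℕ → Bool | ∀ k, n ≤ k → ¬ eqSeg f g k} := by
    have : {f : ℕ → Bool | ∀ k, n ≤ k → ¬ eqSeg f g k} =
        ⋂ k, ⋂ (_ : n ≤ k), {f : ℕ → Bool | eqSeg f g k}ᶜ := by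
      ext f; simp
    rw [this]
    exact isClosed_iInter fun k => isClosed_iInter fun _ =>
      (isClopen_eqSeg g k).isOpen.isClosed_compl
  have hnd : IsNowhereDense {f : ℕ → Bool | ∀ k, n ≤ k → ¬ eqSeg f g k} := by
    rw [hclosed.isNowhereDense_iff, interior_eq_empty_iff_dense_compl]
    have : {f : ℕ → Bool | ∀ k, n ≤ k → ¬ eqSeg f g k}ᶜ =
        {f : ℕ → Bool | ∃ k, n ≤ k ∧ eqSeg f g k} := by
      ext f; simp
    rw [this]
    exact dense_eqSeg_tail g n
  exact isMeagre_iff_countable_union_isNowhereDense.mpr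
    ⟨{_}, by simpa using hnd, Set.countable_singleton _, by simp⟩

lemma nonnull_dominating (μ : Measure (ℕ → Bool)) (hμ : IsUniformProductMeasure μ)
    (S : Set (ℕ → Bool)) (hS : μ S ≠ 0) (f : ℕ → Bool) : ∃ g ∈ S, pfork f g := by
  by_contra hcon
  push_neg at hcon
  set E : ℕ → Set (ℕ → Bool) := fun k => {g : ℕ → Bool | ∀ i ∈ seg k, g i = f i} with hE
  have hmeas : ∀ k, μ (E k) = (2 : ENNReal)⁻¹ ^ (2 ^ (k + 1)) := by
    intro k
    rw [hE]
    simpa [seg_card] using hμ.2 (seg k) f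
  have htsum : (∑' k, μ (E k)) ≠ ⊤ := by
    have hle : (∑' k, μ (E k)) ≤ ∑' k : ℕ, (2 : ENNReal)⁻¹ ^ k := by
      refine ENNReal.tsum_le_tsum fun k => ?_
      rw [hmeas k]
      refine pow_le_pow_of_le_one (zero_le) (by simp) ?_
      calc k ≤ 2 ^ k := (Nat.lt_two_pow_self (n := k)).le
      _ ≤ 2 ^ (k + 1) := Nat.pow_le_pow_right (by norm_num) (by omega)
    refine ne_top_of_le_ne_top ?_ hle
    simpa only [ENNReal.tsum_geometric, ENNReal.one_sub_inv_two, inv_inv] using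
      ENNReal.ofNat_ne_top
  have hlimsup : μ (Filter.limsup E Filter.atTop) = 0 :=
    measure_limsup_atTop_eq_zero htsum
  have hsub : S ⊆ Filter.limsup E Filter.atTop := by
    intro g hg
    have hng := hcon g hg
    rw [Filter.limsup_eq_iInf_iSup_of_nat]
    simp only [Set.iInf_eq_iInter, Set.iSup_eq_iUnion, Set.mem_iInter, Set.mem_iUnion]
    intro n
    simp only [pfork] at hng
    push_neg at hng
    obtain ⟨k, hk, heq⟩ := hng n
    exact ⟨k, hk, fun i hi => ((heq i hi)).symm⟩
  exact hS (le_antisymm ((measure_mono hsub).trans hlimsup.le) (zero_le))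

lemma pfork_self_not (f : ℕ → Bool) : pfork f (fun i => !f i) := by
  refine ⟨0, fun k _ h => ?_⟩
  obtain ⟨i, hi⟩ := seg_nonempty k
  have := h i hi
  simp at this

/-- `cov(M) ≤ 𝔡_⋔ ≤ non(N)`: every `⋔`-dominating family `C` gives a covering of
`2^ω` by `|C|` many meager sets (so `cov(M) ≤ 𝔡_⋔`), and every non-null subset of
`2^ω` is a `⋔`-dominating family (so `𝔡_⋔ ≤ non(N)`). -/
theorem covMeagre_le_dPfork_le_nonNull (μ : Measure (ℕ → Bool))
    (hμ : IsUniformProductMeasure μ) :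
    (∀ C : Set (ℕ → Bool), (∀ f : ℕ → Bool, ∃ g ∈ C, pfork f g) →
      (∀ g ∈ C, IsMeagre {f : ℕ → Bool | pfork f g}) ∧
      (⋃ g ∈ C, {f : ℕ → Bool | pfork f g}) = Set.univ) ∧
    covMeagre ≤ dPfork ∧
    (∀ S : Set (ℕ → Bool), μ S ≠ 0 → ∀ f : ℕ → Bool, ∃ g ∈ S, pfork f g) ∧
    dPfork ≤ nonNull μ := by
  have hpart1 : ∀ C : Set (ℕ → Bool), (∀ f : ℕ → Bool, ∃ g ∈ C, pfork f g) →
      (∀ g ∈ C, IsMeagre {f : ℕ → Bool | pfork f g}) ∧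
      (⋃ g ∈ C, {f : ℕ → Bool | pfork f g}) = Set.univ := by
    intro C hC
    refine ⟨fun g _ => isMeagre_pfork g, ?_⟩
    ext f
    simpa using hC f
  refine ⟨hpart1, ?_, nonnull_dominating μ hμ, ?_⟩
  · -- covMeagre ≤ dPfork
    have hne : {c : Cardinal | ∃ C : Set (ℕ → Bool), Cardinal.mk C = c ∧
        ∀ f : ℕ → Bool, ∃ g ∈ C, pfork f g}.Nonempty :=
      ⟨_, Set.univ, rfl, fun f => ⟨_, trivial, pfork_self_not f⟩⟩
    obtain ⟨C, hCcard, hCdom⟩ := csInf_mem hne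
    obtain ⟨hmeagre, hcover⟩ := hpart1 C hCdom
    have h2 : covMeagre ≤ Cardinal.mk ((fun g => {f : ℕ → Bool | pfork f g}) '' C) := by
      refine csInf_le (OrderBot.bddBelow _) ⟨(fun g => {f : ℕ → Bool | pfork f g}) '' C, rfl, ?_, ?_⟩
      · rintro A ⟨g, hg, rfl⟩
        exact hmeagre g hg
      · rw [Set.sUnion_image]
        exact hcover
    have h3 : Cardinal.mk ((fun g => {f : ℕ → Bool | pfork f g}) '' C) ≤ Cardinal.mk C :=
      Cardinal.mk_image_le
    exact h2.trans (h3.trans_eq hCcard)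
  · -- dPfork ≤ nonNull μ
    have hne : {c : Cardinal | ∃ S : Set (ℕ → Bool), Cardinal.mk S = c ∧ μ S ≠ 0}.Nonempty := by
      refine ⟨_, Set.univ, rfl, ?_⟩
      have := hμ.1
      simp [measure_univ]
    obtain ⟨S, hScard, hSnn⟩ := csInf_mem hne
    exact le_of_le_of_eq
      (csInf_le (OrderBot.bddBelow _) ⟨S, rfl, nonnull_dominating μ hμ S hSnn⟩) hScard
end
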